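/- arXiv:2203.05888 — 4 statements merged into one kernel-verified Lean document; each statement's English description precedes it below -/
import Mathlib

section
/- Let M = (G,𝐑,π) be a Moser–Tardos tuple with G a finite digraph. Call a tree of a landscape's forest airborne if its root has level > 0, and write Trees^∨(L) for the set of airborne trees of L. If L is a finalised M-landscape with |Trees^∨(L)| > 0, then there exists a finalised M-landscape L′ equivalent to L with |Trees^∨(L′)| < |Trees^∨(L)|. -/
open MeasureTheory
open scoped Classical ENNReal

namespace MTLLL

variable {V : Type*} {ι : Type*}

/-- The out-neighbourhood `Var(x)` of a vertex `x` in the digraph with edge relation `E`. -/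
def Var (E : V → V → Prop) (x : V) : Set V := {y | E x y}

/-- The in-neighbourhood `Cl(x)`. -/
def Cl (E : V → V → Prop) (x : V) : Set V := {y | E y x}

/-- The neighbourhood `N(x) = Var(x) ∪ Cl(x)`. -/
def Nbr (E : V → V → Prop) (x : V) : Set V := Var E x ∪ Cl E x

/-- The maximal vertex degree of a digraph, as an extended natural number. -/
noncomputable def maxdeg (E : V → V → Prop) : ℕ∞ := ⨆ x : V, (Nbr E x).encard

/-- The digraph `Rel(G)`: edges join vertices whose out-neighbourhoods intersect. -/
def Rel (E : V → V → Prop) (x y : V) : Prop := (Var E x ∩ Var E y).Nonempty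

/-- A set is independent in a digraph if no edge other than a self-loop joins two of its
elements. -/
def Indep (E : V → V → Prop) (I : Set V) : Prop :=
  ∀ x ∈ I, ∀ y ∈ I, x ≠ y → ¬ E x y

/-- `I` is a maximal independent subset of `X`. -/
def MaxIndepIn (E : V → V → Prop) (X I : Set V) : Prop :=
  I ⊆ X ∧ Indep E I ∧ ∀ J : Set V, I ⊆ J → J ⊆ X → Indep E J → J = I

/-- A local rule: for each vertex `x` a set of colourings of `Var(x)` by `b` colours,
imposing no restriction when `Var(x)` is empty. -/
structure LocalRule (E : V → V → Prop) (b : ℕ) where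
  R : ∀ x : V, Set (Var E x → Fin b)
  isFull_of_empty : ∀ x : V, Var E x = ∅ → R x = Set.univ

/-- The complement rule `𝐑ᶜ(x)`. -/
def LocalRule.Rc {E : V → V → Prop} {b : ℕ} (R : LocalRule E b) (x : V) :
    Set (Var E x → Fin b) := (R.R x)ᶜ

/-- A colouring satisfies the rule if at every vertex its restriction to `Var(x)` obeys
`𝐑(x)`. -/
def Satisfies (E : V → V → Prop) {b : ℕ} (R : LocalRule E b) (f : V → Fin b) : Prop :=
  ∀ x : V, (fun y : Var E x => f y.1) ∈ R.R x

/-- The bad set `B(f)` of clauses violated by `f`. -/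
def bad (E : V → V → Prop) {b : ℕ} (R : LocalRule E b) (f : V → Fin b) : Set V :=
  {x : V | (fun y : Var E x => f y.1) ∈ R.Rc x}

/-- The symmetrisation of the digraph, with loops removed, as a simple graph;
it is used to measure graph distances. -/
def toSG (E : V → V → Prop) : SimpleGraph V where
  Adj x y := x ≠ y ∧ (E x y ∨ E y x)
  symm := ⟨fun x y h => ⟨Ne.symm h.1, h.2.symm⟩⟩
  loopless := ⟨fun x h => h.1 rfl⟩

/-- The ball of radius `r` around `x` in graph distance (ignoring orientations). -/
def ball (E : V → V → Prop) (x : V) (r : ℕ) : Set V :=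
  {y | ∃ p : (toSG E).Walk x y, p.length ≤ r}

/-- The class `subexp(R,ε,d)`: max degree at most `d` and balls of radius `3R` of size at
most `(1+ε)^R`. -/
def Subexp (E : V → V → Prop) (Rad d : ℕ) (ε : ℝ) : Prop :=
  maxdeg E ≤ (d : ℕ∞) ∧
  ∀ x : V, (ball E x (3 * Rad)).Finite ∧ ((ball E x (3 * Rad)).ncard : ℝ) ≤ (1 + ε) ^ Rad

/-- A partition (encoded by the map sending a vertex to its part) is `r`-sparse if distinct
vertices in the same part are at graph distance greater than `2r`. -/
def Sparse (E : V → V → Prop) (part : V → ι) (r : ℕ) : Prop :=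
  ∀ x y : V, part x = part y → x ≠ y → y ∉ ball E x (2 * r)

/-- An independence function: `I X` is always a maximal independent subset of `X`. -/
def IndepFun (E : V → V → Prop) (I : Set V → Set V) : Prop :=
  ∀ X : Set V, MaxIndepIn E X (I X)

/-- `Var` of a set of vertices. -/
def VarSet (E : V → V → Prop) (A : Set V) : Set V := ⋃ x ∈ A, Var E x

/-- One run of the Moser–Tardos algorithm: `(mtAux j).1 = MT^j` and `(mtAux j).2 = h^{j+1}`. -/
noncomputable def mtAux (E : V → V → Prop) {b : ℕ} (R : LocalRule E b)
    (part : V → ι) (I : Set V → Set V) (rnd : ι × ℕ → Fin b) :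
    ℕ → (V → Fin b) × (V → ℕ)
  | 0 => (fun x => rnd (part x, 0), fun _ => 1)
  | j + 1 =>
    let p := mtAux E R part I rnd j
    (fun x => if x ∈ VarSet E (I (bad E R p.1)) then rnd (part x, p.2 x) else p.1 x,
     fun x => if x ∈ VarSet E (I (bad E R p.1)) then p.2 x + 1 else p.2 x)

/-- The colouring `MT^j` produced by the Moser–Tardos algorithm. -/
noncomputable def MT (E : V → V → Prop) {b : ℕ} (R : LocalRule E b)
    (part : V → ι) (I : Set V → Set V) (rnd : ι × ℕ → Fin b) (j : ℕ) : V → Fin b :=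
  (mtAux E R part I rnd j).1

/-- The resampling counters `h^k`. -/
noncomputable def hres (E : V → V → Prop) {b : ℕ} (R : LocalRule E b)
    (part : V → ι) (I : Set V → Set V) (rnd : ι × ℕ → Fin b) : ℕ → V → ℕ
  | 0 => fun _ => 0
  | j + 1 => (mtAux E R part I rnd j).2

/-- The total number `h^∞(x)` of resamplings at `x`. -/
noncomputable def hinf (E : V → V → Prop) {b : ℕ} (R : LocalRule E b)
    (part : V → ι) (I : Set V → Set V) (rnd : ι × ℕ → Fin b) (x : V) : ℕ∞ :=
  ⨆ k : ℕ, (hres E R part I rnd k x : ℕ∞)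

/-- `μ` is the product over `ι × ℕ` of uniform measures on `Fin b`: it is a probability
measure giving each cylinder set its natural measure. -/
def IsUnifProduct {ι : Type*} (b : ℕ) (μ : Measure ((ι × ℕ) → Fin b)) : Prop :=
  IsProbabilityMeasure μ ∧
  ∀ (s : Finset (ι × ℕ)) (g : (ι × ℕ) → Fin b),
    μ {rnd | ∀ p ∈ s, rnd p = g p} = (1 / (b : ℝ≥0∞)) ^ s.card

end MTLLL
namespace MTLLL

variable {V : Type*} {ι : Type*}

/-- A `G`-forest: a subdigraph of `Canvas(G)` (vertices `V × ℕ`, edges going up one level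
between `Rel`-adjacent vertices) in which every vertex has in-degree `0` or `1`. -/
structure GForest (E : V → V → Prop) where
  verts : Set (V × ℕ)
  edges : V × ℕ → V × ℕ → Prop
  edges_mem_left : ∀ a c : V × ℕ, edges a c → a ∈ verts
  edges_mem_right : ∀ a c : V × ℕ, edges a c → c ∈ verts
  edges_rel : ∀ a c : V × ℕ, edges a c → Rel E a.1 c.1
  edges_level : ∀ a c : V × ℕ, edges a c → c.2 = a.2 + 1
  indeg_le_one : ∀ c a a' : V × ℕ, edges a c → edges a' c → a = a'

/-- A forest is grounded if every root (in-degree `0` vertex) has level `0`. -/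
def GForest.Grounded {E : V → V → Prop} (F : GForest E) : Prop :=
  ∀ a ∈ F.verts, (∀ a' : V × ℕ, ¬ F.edges a' a) → a.2 = 0

/-- A forest has finite height if its levels are bounded. -/
def GForest.FinHeight {E : V → V → Prop} (F : GForest E) : Prop :=
  ∃ j : ℕ, ∀ a ∈ F.verts, a.2 < j

/-- A forest is independent if each of its level sets is independent in `Rel(G)`. -/
def GForest.LevelIndep {E : V → V → Prop} (F : GForest E) : Prop :=
  ∀ i : ℕ, Indep (Rel E) {x : V | (x, i) ∈ F.verts}

/-- `varcount(F) = |V(G)| + Σ_{(x,i) ∈ V(F)} |Var(x)|`. -/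
noncomputable def GForest.varcount {E : V → V → Prop} (F : GForest E) : ℕ :=
  Nat.card V + ∑ᶠ a ∈ F.verts, (Var E (Prod.fst a)).ncard

/-- The set of roots of airborne trees (trees whose root has positive level). -/
def airborneRoots {E : V → V → Prop} (F : GForest E) : Set (V × ℕ) :=
  {a ∈ F.verts | (∀ a' : V × ℕ, ¬ F.edges a' a) ∧ 0 < a.2}

/-- A finalised `M`-landscape: an independent `G`-forest of finite height together with a
violation datum `vio (x,i) ∈ 𝐑ᶜ(x)` at each of its vertices, and a final colouring. -/
structure FinLandscape (E : V → V → Prop) (b : ℕ) (R : LocalRule E b) where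
  F : GForest E
  levelIndep : F.LevelIndep
  finHeight : F.FinHeight
  vio : ∀ a : F.verts, Var E (a : V × ℕ).1 → Fin b
  vio_not_mem : ∀ a : F.verts, vio a ∈ R.Rc (a : V × ℕ).1
  fin : V → Fin b

/-- The sequence `Used_L(x)`: the values `vio(y,s)(x)` over the (at most one per level)
vertices `(y,s)` of the forest with `x ∈ Var(y)`, in increasing order of level, followed by
the final value `fin x`. -/
noncomputable def FinLandscape.Used {E : V → V → Prop} {b : ℕ} {R : LocalRule E b}
    (L : FinLandscape E b R) (x : V) : List (Fin b) :=
  ((List.range (Nat.find L.finHeight)).filterMap fun i =>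
    if h : ∃ y : V, ∃ _ : (y, i) ∈ L.F.verts, x ∈ Var E y then
      some (L.vio ⟨(h.choose, i), h.choose_spec.choose⟩ ⟨x, h.choose_spec.choose_spec⟩)
    else none) ++ [L.fin x]

/-- The finalised landscape `L^k` associated to a run of the Moser–Tardos algorithm
(relative to a linear order used to pick parents in the forest). -/
noncomputable def runLandscape (E : V → V → Prop) {b : ℕ} (R : LocalRule E b)
    (part : V → ι) {I : Set V → Set V} (hI : IndepFun (Rel E) I)
    (rnd : ι × ℕ → Fin b) (lo : LinearOrder V) (k : ℕ) :
    FinLandscape E b R where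
  F :=
    { verts := {a : V × ℕ | a.2 < k ∧ a.1 ∈ I (bad E R (MT E R part I rnd a.2))}
      edges := fun a c =>
        (c.2 < k ∧ c.1 ∈ I (bad E R (MT E R part I rnd c.2))) ∧ c.2 = a.2 + 1 ∧
        (a.1 ∈ I (bad E R (MT E R part I rnd a.2)) ∧ (Var E a.1 ∩ Var E c.1).Nonempty) ∧
        ∀ z : V, z ∈ I (bad E R (MT E R part I rnd a.2)) →
          (Var E z ∩ Var E c.1).Nonempty → lo.le a.1 z
      edges_mem_left := by
        rintro a c ⟨⟨hck, -⟩, hlev, ⟨haI, -⟩, -⟩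
        exact ⟨by omega, haI⟩
      edges_mem_right := fun a c h => h.1
      edges_rel := fun a c h => h.2.2.1.2
      edges_level := fun a c h => h.2.1
      indeg_le_one := by
        rintro c a a' ⟨-, hlev, ⟨haI, haV⟩, hmin⟩ ⟨-, hlev', ⟨haI', haV'⟩, hmin'⟩
        have h2 : a.2 = a'.2 := by omega
        rw [h2] at haI hmin
        have h1 : a.1 = a'.1 := lo.le_antisymm _ _ (hmin _ haI' haV') (hmin' _ haI haV)
        exact Prod.ext h1 h2 }
  levelIndep := by
    intro i x hx y hy hxy
    exact (hI (bad E R (MT E R part I rnd i))).2.1 x hx.2 y hy.2 hxy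
  finHeight := ⟨k, fun a ha => ha.1⟩
  vio := fun a => fun y => MT E R part I rnd (a : V × ℕ).2 y.1
  vio_not_mem := fun a => (hI (bad E R (MT E R part I rnd (a : V × ℕ).2))).1 a.2.2
  fin := MT E R part I rnd k

end MTLLL
namespace MTLLL

variable {V : Type*} {E : V → V → Prop} {b : ℕ} {R : LocalRule E b}

lemma varNonempty (L : FinLandscape E b R) {u : V × ℕ} (hu : u ∈ L.F.verts) :
    (Var E u.1).Nonempty := by
  by_contra h
  rw [Set.not_nonempty_iff_eq_empty] at h
  have h2 := L.vio_not_mem ⟨u, hu⟩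
  rw [LocalRule.Rc, R.isFull_of_empty _ h] at h2
  simp at h2

lemma rel_self (L : FinLandscape E b R) {u : V × ℕ} (hu : u ∈ L.F.verts) :
    Rel E u.1 u.1 := by
  obtain ⟨y, hy⟩ := varNonempty L hu
  exact ⟨y, hy, hy⟩

lemma verts_finite [Fintype V] (L : FinLandscape E b R) : L.F.verts.Finite := by
  obtain ⟨k, hk⟩ := L.finHeight
  exact Set.Finite.subset (Set.finite_univ.prod (Set.finite_Iio k))
    (fun u hu => ⟨Set.mem_univ _, hk u hu⟩)

lemma airborne_finite [Fintype V] (L : FinLandscape E b R) :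
    (airborneRoots L.F).Finite :=
  (verts_finite L).subset (fun u hu => hu.1)

/-- The per-level entry of `Used`. -/
noncomputable def wfun (L : FinLandscape E b R) (x : V) (i : ℕ) : Option (Fin b) :=
  if h : ∃ y : V, ∃ _ : (y, i) ∈ L.F.verts, x ∈ Var E y then
    some (L.vio ⟨(h.choose, i), h.choose_spec.choose⟩ ⟨x, h.choose_spec.choose_spec⟩)
  else none

lemma Used_eq_wfun (L : FinLandscape E b R) (x : V) :
    L.Used x = ((List.range (Nat.find L.finHeight)).filterMap (wfun L x)) ++ [L.fin x] := rfl

lemma vio_congr (L : FinLandscape E b R) {y y' : V} {i : ℕ} (e : y = y')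
    (h1 : (y, i) ∈ L.F.verts) (h1' : (y', i) ∈ L.F.verts) {x : V}
    (h2 : x ∈ Var E y) (h2' : x ∈ Var E y') :
    L.vio ⟨(y, i), h1⟩ ⟨x, h2⟩ = L.vio ⟨(y', i), h1'⟩ ⟨x, h2'⟩ := by subst e; rfl

lemma wfun_eq_some (L : FinLandscape E b R) {x y : V} {i : ℕ}
    (h1 : (y, i) ∈ L.F.verts) (h2 : x ∈ Var E y) :
    wfun L x i = some (L.vio ⟨(y, i), h1⟩ ⟨x, h2⟩) := by
  have h : ∃ y : V, ∃ _ : (y, i) ∈ L.F.verts, x ∈ Var E y := ⟨y, h1, h2⟩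
  rw [wfun, dif_pos h]
  have e : h.choose = y := by
    by_contra hne
    exact L.levelIndep i h.choose h.choose_spec.choose y h1 hne
      ⟨x, h.choose_spec.choose_spec, h2⟩
  exact congrArg some (vio_congr L e _ h1 _ h2)

lemma wfun_eq_none (L : FinLandscape E b R) {x : V} {i : ℕ}
    (h : ∀ y : V, (y, i) ∈ L.F.verts → x ∉ Var E y) : wfun L x i = none := by
  rw [wfun, dif_neg]
  rintro ⟨y, hy, hx⟩
  exact h y hy hx

lemma filterMap_range_pad {α : Type*} (g : ℕ → Option α) {m n : ℕ} (hmn : m ≤ n)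
    (hg : ∀ j, m ≤ j → g j = none) :
    (List.range n).filterMap g = (List.range m).filterMap g := by
  induction n, hmn using Nat.le_induction with
  | base => rfl
  | succ n hmn ih => simp [List.range_succ, hg n hmn, ih]

lemma filterMap_shift {α : Type*} (f g : ℕ → Option α) (sh : ℕ → Prop)
    (hC1 : ∀ j, g j = if sh (j + 1) then f (j + 1)
      else if (f j).isSome ∧ ¬ sh j then f j else none)
    (hC2 : ∀ j, sh (j + 1) → sh j ∨ f j = none)
    (hC3 : ¬ sh 0) :
    ∀ n, (List.range (n + 1)).filterMap f =
      (List.range n).filterMap g ++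
        (if (f n).isSome ∧ ¬ sh n then (f n).toList else []) := by
  intro n
  induction n with
  | zero =>
    cases h0 : f 0 <;> simp [hC3, h0, List.range_succ]
  | succ n ih =>
    have e1 : List.range (n + 1 + 1) = List.range (n + 1) ++ [n + 1] := List.range_succ
    have e2 : List.range (n + 1) = List.range n ++ [n] := List.range_succ
    rw [e1, List.filterMap_append, ih]
    conv_rhs => rw [e2]
    rw [List.filterMap_append, List.append_assoc, List.append_assoc]
    congr 1
    by_cases hs1 : sh (n + 1)
    · rcases hC2 n hs1 with h | h
      · cases hf : f (n + 1) <;> simp [hC1 n, hs1, h, hf]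
      · cases hf : f (n + 1) <;> simp [hC1 n, hs1, h, hf]
    · cases hf : f (n + 1) <;> cases hfn : f n <;> by_cases hsn : sh n <;>
        simp [hC1 n, hs1, hf, hfn, hsn]

lemma used_eq_of_rel (L L' : FinLandscape E b R) (hfin : L'.fin = L.fin)
    (sh : V → ℕ → Prop)
    (hC1 : ∀ x j, wfun L' x j = if sh x (j + 1) then wfun L x (j + 1)
      else if (wfun L x j).isSome ∧ ¬ sh x j then wfun L x j else none)
    (hC2 : ∀ x j, sh x (j + 1) → sh x j ∨ wfun L x j = none)
    (hC3 : ∀ x, ¬ sh x 0)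
    (hv : ∀ u ∈ L'.F.verts, u.2 < Nat.find L.finHeight) :
    L'.Used = L.Used := by
  funext x
  set N := Nat.find L.finHeight with hN
  have hfN : ∀ j, N ≤ j → wfun L x j = none := by
    intro j hj
    refine wfun_eq_none L fun y hy _ => ?_
    have := Nat.find_spec L.finHeight (y, j) hy
    omega
  have hgN' : ∀ j, Nat.find L'.finHeight ≤ j → wfun L' x j = none := by
    intro j hj
    refine wfun_eq_none L' fun y hy _ => ?_
    have := Nat.find_spec L'.finHeight (y, j) hy
    omega
  have hN'le : Nat.find L'.finHeight ≤ N := Nat.find_le hv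
  have hkey := filterMap_shift (wfun L x) (wfun L' x) (sh x) (hC1 x) (hC2 x) (hC3 x) N
  rw [List.range_succ, List.filterMap_append] at hkey
  simp [hfN N le_rfl] at hkey
  rw [filterMap_range_pad (wfun L' x) hN'le hgN'] at hkey
  rw [Used_eq_wfun, Used_eq_wfun, hfin, ← hN, hkey]

noncomputable def attachF (L : FinLandscape E b R) (a : V × ℕ) (z : V)
    (haV : a ∈ L.F.verts) (hroot : ∀ a', ¬ L.F.edges a' a) (hpos : 0 < a.2)
    (hz : (z, a.2 - 1) ∈ L.F.verts) (hrel : Rel E z a.1) : GForest E where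
  verts := L.F.verts
  edges := fun u c => L.F.edges u c ∨ (c = a ∧ u = (z, a.2 - 1))
  edges_mem_left := by
    rintro u c (h | ⟨rfl, rfl⟩)
    · exact L.F.edges_mem_left u c h
    · exact hz
  edges_mem_right := by
    rintro u c (h | ⟨rfl, rfl⟩)
    · exact L.F.edges_mem_right u c h
    · exact haV
  edges_rel := by
    rintro u c (h | ⟨rfl, rfl⟩)
    · exact L.F.edges_rel u c h
    · exact hrel
  edges_level := by
    rintro u c (h | ⟨rfl, rfl⟩)
    · exact L.F.edges_level u c h
    · simp; omega
  indeg_le_one := by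
    rintro c u u' (h | ⟨rfl, rfl⟩) (h' | ⟨hc', rfl⟩)
    · exact L.F.indeg_le_one c u u' h h'
    · exact absurd (hc' ▸ h) (hroot u)
    · exact absurd h' (hroot u')
    · rfl

lemma airborneRoots_attachF (L : FinLandscape E b R) (a : V × ℕ) (z : V)
    (haV : a ∈ L.F.verts) (hroot : ∀ a', ¬ L.F.edges a' a) (hpos : 0 < a.2)
    (hz : (z, a.2 - 1) ∈ L.F.verts) (hrel : Rel E z a.1) :
    airborneRoots (attachF L a z haV hroot hpos hz hrel) = airborneRoots L.F \ {a} := by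
  ext u
  constructor
  · rintro ⟨hu, hne, hupos⟩
    refine ⟨⟨hu, fun u' h => hne u' (Or.inl h), hupos⟩, ?_⟩
    rintro rfl
    exact hne (z, u.2 - 1) (Or.inr ⟨rfl, rfl⟩)
  · rintro ⟨⟨hu, hne, hupos⟩, hna⟩
    refine ⟨hu, ?_, hupos⟩
    rintro u' (h | ⟨rfl, rfl⟩)
    · exact hne u' h
    · exact hna rfl

lemma attach_step [Fintype V] (L : FinLandscape E b R) (a : V × ℕ)
    (ha : a ∈ airborneRoots L.F) (z : V) (hz : (z, a.2 - 1) ∈ L.F.verts)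
    (hrel : Rel E z a.1) :
    ∃ L' : FinLandscape E b R,
      (L'.F.verts.ncard = L.F.verts.ncard ∧ L'.Used = L.Used) ∧
      (airborneRoots L'.F).ncard < (airborneRoots L.F).ncard := by
  obtain ⟨haV, hroot, hpos⟩ := ha
  refine ⟨{ F := attachF L a z haV hroot hpos hz hrel
            levelIndep := L.levelIndep
            finHeight := L.finHeight
            vio := L.vio
            vio_not_mem := L.vio_not_mem
            fin := L.fin }, ⟨rfl, rfl⟩, ?_⟩
  rw [airborneRoots_attachF]
  exact Set.ncard_diff_singleton_lt_of_mem ⟨haV, hroot, hpos⟩ (airborne_finite L)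

/-- The shifted part of the tree rooted at `a`: vertices reachable from the root all of
whose `Rel`-neighbours one level below are also shifted. -/
inductive Sh (L : FinLandscape E b R) (a : V × ℕ) : V × ℕ → Prop
  | root : Sh L a a
  | step {p c : V × ℕ} : L.F.edges p c → Sh L a p →
      (∀ z : V, (z, p.2) ∈ L.F.verts → Rel E z c.1 → Sh L a (z, p.2)) → Sh L a c

lemma rel_symm {y y' : V} (h : Rel E y y') : Rel E y' y := by
  obtain ⟨w, h1, h2⟩ := h
  exact ⟨w, h2, h1⟩

section Shift

variable {L : FinLandscape E b R} {a : V × ℕ}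

lemma Sh.sub (haV : a ∈ L.F.verts) {u : V × ℕ} (h : Sh L a u) : u ∈ L.F.verts := by
  induction h with
  | root => exact haV
  | step h1 h2 h3 ih2 ih3 => exact L.F.edges_mem_right _ _ h1

lemma Sh.level {u : V × ℕ} (h : Sh L a u) : a.2 ≤ u.2 := by
  induction h with
  | root => exact le_rfl
  | @step p c h1 h2 h3 ih2 ih3 =>
    have := L.F.edges_level _ _ h1
    omega

lemma Sh.pos (hpos : 0 < a.2) {u : V × ℕ} (h : Sh L a u) : 0 < u.2 :=
  lt_of_lt_of_le hpos h.level

lemma Sh.key (hB : ∀ z : V, (z, a.2 - 1) ∈ L.F.verts → ¬ Rel E z a.1)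
    {u : V × ℕ} (h : Sh L a u) :
    ∀ z : V, (z, u.2 - 1) ∈ L.F.verts → Rel E z u.1 → Sh L a (z, u.2 - 1) := by
  induction h with
  | root => exact fun z h1 h2 => absurd h2 (hB z h1)
  | @step p c h1 h2 h3 ih2 ih3 =>
    intro z hz1 hz2
    have hl := L.F.edges_level _ _ h1
    have e : c.2 - 1 = p.2 := by omega
    rw [e]
    exact h3 z (e ▸ hz1) hz2

lemma Sh.parent (hroot : ∀ a', ¬ L.F.edges a' a) {p c : V × ℕ}
    (h : Sh L a c) (he : L.F.edges p c) : Sh L a p := by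
  cases h with
  | root => exact absurd he (hroot p)
  | @step p' c h1 h2 h3 =>
    have e := L.F.indeg_le_one c p p' he h1
    rw [e]
    exact h2

lemma Sh.lower (haV : a ∈ L.F.verts)
    (hB : ∀ z : V, (z, a.2 - 1) ∈ L.F.verts → ¬ Rel E z a.1)
    {u : V × ℕ} (h : Sh L a u) (h1 : (u.1, u.2 - 1) ∈ L.F.verts) :
    Sh L a (u.1, u.2 - 1) :=
  h.key hB u.1 h1 (rel_self L (h.sub haV))

lemma sh_of_root (hroot : ∀ a', ¬ L.F.edges a' a) {v : V × ℕ}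
    (hv : ∀ p, ¬ L.F.edges p v) (h : Sh L a v) : v = a := by
  cases h with
  | root => rfl
  | @step p c h1 h2 h3 => exact absurd h1 (hv p)

end Shift

/-- The vertex set after shifting. -/
def shiftVerts (L : FinLandscape E b R) (a : V × ℕ) : Set (V × ℕ) :=
  {u | ((u.1, u.2 + 1) ∈ L.F.verts ∧ Sh L a (u.1, u.2 + 1)) ∨ (u ∈ L.F.verts ∧ ¬ Sh L a u)}

noncomputable def shiftMap (L : FinLandscape E b R) (a : V × ℕ) : V × ℕ → V × ℕ :=
  fun u => if Sh L a u then (u.1, u.2 - 1) else u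

noncomputable def newpar (L : FinLandscape E b R) (a : V × ℕ) : V × ℕ → V × ℕ → V × ℕ :=
  fun p pc =>
    if Sh L a pc then (p.1, p.2 - 1)
    else if h : ∃ z : V, (z, p.2) ∈ L.F.verts ∧ Rel E z pc.1 ∧ ¬ Sh L a (z, p.2) then
      (h.choose, p.2)
    else p

def shiftEdges (L : FinLandscape E b R) (a : V × ℕ) : V × ℕ → V × ℕ → Prop :=
  fun u c => ∃ p pc : V × ℕ, L.F.edges p pc ∧ c = shiftMap L a pc ∧ u = newpar L a p pc

section Shift2

variable {L : FinLandscape E b R} {a : V × ℕ}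

lemma not_sh_parent {p pc : V × ℕ} (he : L.F.edges p pc) (hnc : ¬ Sh L a pc)
    (hne : ¬ ∃ z : V, (z, p.2) ∈ L.F.verts ∧ Rel E z pc.1 ∧ ¬ Sh L a (z, p.2)) :
    ¬ Sh L a p := fun hp =>
  hnc (Sh.step he hp (fun z h1 h2 => by
    by_contra hzm
    exact hne ⟨z, h1, h2, hzm⟩))

lemma shiftVerts_eq_image (haV : a ∈ L.F.verts) (hpos : 0 < a.2) :
    shiftVerts L a = shiftMap L a '' L.F.verts := by
  ext u
  constructor
  · rintro (⟨h1, h2⟩ | ⟨h1, h2⟩)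
    · refine ⟨(u.1, u.2 + 1), h1, ?_⟩
      simp only [shiftMap, if_pos h2]
      rfl
    · exact ⟨u, h1, by simp only [shiftMap, if_neg h2]⟩
  · rintro ⟨⟨y, i⟩, hv, rfl⟩
    by_cases hm : Sh L a (y, i)
    · have hvpos : 0 < i := Sh.pos hpos hm
      have e : i - 1 + 1 = i := by omega
      simp only [shiftMap, if_pos hm]
      refine Or.inl ⟨?_, ?_⟩
      · show (y, i - 1 + 1) ∈ L.F.verts
        rw [e]; exact hv
      · show Sh L a (y, i - 1 + 1)
        rw [e]; exact hm
    · simp only [shiftMap, if_neg hm]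
      exact Or.inr ⟨hv, hm⟩

lemma shiftMap_injOn (haV : a ∈ L.F.verts) (hpos : 0 < a.2)
    (hB : ∀ z : V, (z, a.2 - 1) ∈ L.F.verts → ¬ Rel E z a.1) :
    Set.InjOn (shiftMap L a) L.F.verts := by
  intro u hu v hv he
  by_cases hmu : Sh L a u <;> by_cases hmv : Sh L a v
  · simp only [shiftMap, if_pos hmu, if_pos hmv] at he
    simp only [Prod.mk.injEq] at he
    have hu2 := Sh.pos hpos hmu
    have hv2 := Sh.pos hpos hmv
    obtain ⟨he1, he2⟩ := he
    exact Prod.ext he1 (by omega)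
  · simp only [shiftMap, if_pos hmu, if_neg hmv] at he
    have hsh : Sh L a (u.1, u.2 - 1) := Sh.lower haV hB hmu (by rw [he]; exact hv)
    rw [he] at hsh
    exact absurd hsh hmv
  · simp only [shiftMap, if_pos hmv, if_neg hmu] at he
    have hsh : Sh L a (v.1, v.2 - 1) := Sh.lower haV hB hmv (by rw [← he]; exact hu)
    rw [← he] at hsh
    exact absurd hsh hmu
  · simp only [shiftMap, if_neg hmu, if_neg hmv] at he
    exact he

lemma shiftMap_mem (haV : a ∈ L.F.verts) (hpos : 0 < a.2) {v : V × ℕ}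
    (hv : v ∈ L.F.verts) : shiftMap L a v ∈ shiftVerts L a := by
  rw [shiftVerts_eq_image haV hpos]
  exact Set.mem_image_of_mem _ hv

end Shift2

noncomputable def shiftF (L : FinLandscape E b R) (a : V × ℕ)
    (haV : a ∈ L.F.verts) (hroot : ∀ a', ¬ L.F.edges a' a) (hpos : 0 < a.2)
    (hB : ∀ z : V, (z, a.2 - 1) ∈ L.F.verts → ¬ Rel E z a.1) : GForest E where
  verts := shiftVerts L a
  edges := shiftEdges L a
  edges_mem_left := by
    rintro u c ⟨p, pc, he, rfl, rfl⟩
    have hpv := L.F.edges_mem_left _ _ he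
    by_cases hmc : Sh L a pc
    · have hmp : Sh L a p := Sh.parent hroot hmc he
      simp only [newpar, if_pos hmc]
      have hp2 : 0 < p.2 := Sh.pos hpos hmp
      have e : p.2 - 1 + 1 = p.2 := by omega
      refine Or.inl ⟨?_, ?_⟩
      · show (p.1, p.2 - 1 + 1) ∈ L.F.verts
        rw [e]; exact hpv
      · show Sh L a (p.1, p.2 - 1 + 1)
        rw [e]; exact hmp
    · simp only [newpar, if_neg hmc]
      by_cases hz : ∃ z : V, (z, p.2) ∈ L.F.verts ∧ Rel E z pc.1 ∧ ¬ Sh L a (z, p.2)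
      · rw [dif_pos hz]
        exact Or.inr ⟨hz.choose_spec.1, hz.choose_spec.2.2⟩
      · rw [dif_neg hz]
        exact Or.inr ⟨hpv, not_sh_parent he hmc hz⟩
  edges_mem_right := by
    rintro u c ⟨p, pc, he, rfl, rfl⟩
    exact shiftMap_mem haV hpos (L.F.edges_mem_right _ _ he)
  edges_rel := by
    rintro u c ⟨p, pc, he, rfl, rfl⟩
    by_cases hmc : Sh L a pc
    · simp only [newpar, shiftMap, if_pos hmc]
      exact L.F.edges_rel _ _ he
    · simp only [newpar, shiftMap, if_neg hmc]
      by_cases hz : ∃ z : V, (z, p.2) ∈ L.F.verts ∧ Rel E z pc.1 ∧ ¬ Sh L a (z, p.2)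
      · rw [dif_pos hz]
        exact hz.choose_spec.2.1
      · rw [dif_neg hz]
        exact L.F.edges_rel _ _ he
  edges_level := by
    rintro u c ⟨p, pc, he, rfl, rfl⟩
    have hl := L.F.edges_level _ _ he
    by_cases hmc : Sh L a pc
    · have hmp : Sh L a p := Sh.parent hroot hmc he
      have hp2 : 0 < p.2 := Sh.pos hpos hmp
      simp only [newpar, shiftMap, if_pos hmc]
      show pc.2 - 1 = p.2 - 1 + 1
      omega
    · simp only [newpar, shiftMap, if_neg hmc]
      by_cases hz : ∃ z : V, (z, p.2) ∈ L.F.verts ∧ Rel E z pc.1 ∧ ¬ Sh L a (z, p.2)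
      · rw [dif_pos hz]
        exact hl
      · rw [dif_neg hz]
        exact hl
  indeg_le_one := by
    rintro c u u' ⟨p, pc, he, hc, rfl⟩ ⟨p', pc', he', hc', rfl⟩
    have h1 : pc = pc' :=
      shiftMap_injOn haV hpos hB (L.F.edges_mem_right _ _ he)
        (L.F.edges_mem_right _ _ he') (hc.symm.trans hc')
    subst h1
    have h2 : p = p' := L.F.indeg_le_one pc p p' he he'
    rw [h2]

noncomputable def shiftL (L : FinLandscape E b R) (a : V × ℕ)
    (haV : a ∈ L.F.verts) (hroot : ∀ a', ¬ L.F.edges a' a) (hpos : 0 < a.2)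
    (hB : ∀ z : V, (z, a.2 - 1) ∈ L.F.verts → ¬ Rel E z a.1) :
    FinLandscape E b R where
  F := shiftF L a haV hroot hpos hB
  levelIndep := by
    intro i y hy y' hy' hne hrel
    rcases hy with ⟨h1, h2⟩ | ⟨h1, h2⟩ <;> rcases hy' with ⟨h1', h2'⟩ | ⟨h1', h2'⟩
    · exact L.levelIndep (i + 1) y h1 y' h1' hne hrel
    · exact h2' (Sh.key hB h2 y' h1' (rel_symm hrel))
    · exact h2 (Sh.key hB h2' y h1 hrel)
    · exact L.levelIndep i y h1 y' h1' hne hrel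
  finHeight := by
    obtain ⟨k, hk⟩ := L.finHeight
    refine ⟨k, ?_⟩
    rintro u (⟨h1, _⟩ | ⟨h1, _⟩)
    · have := hk _ h1
      simp only at this
      omega
    · exact hk u h1
  vio := fun u =>
    if h : (u : V × ℕ) ∈ L.F.verts ∧ ¬ Sh L a (u : V × ℕ) then L.vio ⟨u, h.1⟩
    else L.vio ⟨((u : V × ℕ).1, (u : V × ℕ).2 + 1), by
      rcases u.2 with h' | h'
      · exact h'.1
      · exact absurd h' h⟩
  vio_not_mem := by
    intro u
    beta_reduce
    split_ifs with h
    · exact L.vio_not_mem ⟨(u : V × ℕ), h.1⟩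
    · exact L.vio_not_mem ⟨((u : V × ℕ).1, (u : V × ℕ).2 + 1), by
        rcases u.2 with h' | h'
        · exact h'.1
        · exact absurd h' h⟩
  fin := L.fin

section Shift3

variable {L : FinLandscape E b R} {a : V × ℕ}
variable (haV : a ∈ L.F.verts) (hroot : ∀ a', ¬ L.F.edges a' a) (hpos : 0 < a.2)
variable (hB : ∀ z : V, (z, a.2 - 1) ∈ L.F.verts → ¬ Rel E z a.1)

lemma shiftL_ncard [Fintype V] :
    (shiftL L a haV hroot hpos hB).F.verts.ncard = L.F.verts.ncard := by
  show (shiftVerts L a).ncard = _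
  rw [shiftVerts_eq_image haV hpos,
    Set.ncard_image_of_injOn (shiftMap_injOn haV hpos hB)]

lemma shiftL_vio_shifted {y : V} {j : ℕ} (h1 : (y, j + 1) ∈ L.F.verts)
    (hm : Sh L a (y, j + 1)) (hv' : ((y, j) : V × ℕ) ∈ (shiftF L a haV hroot hpos hB).verts)
    {x : V} (h2 : x ∈ Var E y) :
    (shiftL L a haV hroot hpos hB).vio ⟨(y, j), hv'⟩ ⟨x, h2⟩ =
      L.vio ⟨(y, j + 1), h1⟩ ⟨x, h2⟩ := by
  dsimp only [shiftL]
  rw [dif_neg (fun hc : ((y, j) : V × ℕ) ∈ L.F.verts ∧ ¬ Sh L a ((y, j) : V × ℕ) =>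
    hc.2 (Sh.lower haV hB hm hc.1))]

lemma shiftL_vio_unshifted {y : V} {j : ℕ} (h1 : (y, j) ∈ L.F.verts)
    (hns : ¬ Sh L a (y, j)) (hv' : ((y, j) : V × ℕ) ∈ (shiftF L a haV hroot hpos hB).verts)
    {x : V} (h2 : x ∈ Var E y) :
    (shiftL L a haV hroot hpos hB).vio ⟨(y, j), hv'⟩ ⟨x, h2⟩ =
      L.vio ⟨(y, j), h1⟩ ⟨x, h2⟩ := by
  dsimp only [shiftL]
  rw [dif_pos ⟨h1, hns⟩]

lemma shiftL_used : (shiftL L a haV hroot hpos hB).Used = L.Used := by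
  refine used_eq_of_rel L (shiftL L a haV hroot hpos hB) rfl
    (fun x j => ∃ y : V, (y, j) ∈ L.F.verts ∧ x ∈ Var E y ∧ Sh L a (y, j)) ?_ ?_ ?_ ?_
  · intro x j
    by_cases hs1 : ∃ y : V, (y, j + 1) ∈ L.F.verts ∧ x ∈ Var E y ∧ Sh L a (y, j + 1)
    · rw [if_pos hs1]
      obtain ⟨y, h1, h2, hm⟩ := hs1
      have hv' : ((y, j) : V × ℕ) ∈ (shiftF L a haV hroot hpos hB).verts := Or.inl ⟨h1, hm⟩
      rw [wfun_eq_some _ hv' h2, wfun_eq_some L h1 h2]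
      exact congrArg some (shiftL_vio_shifted haV hroot hpos hB h1 hm hv' h2)
    · rw [if_neg hs1]
      by_cases hw : ∃ y : V, (y, j) ∈ L.F.verts ∧ x ∈ Var E y
      · obtain ⟨y, h1, h2⟩ := hw
        by_cases hm : Sh L a (y, j)
        · rw [if_neg (fun hc => hc.2 ⟨y, h1, h2, hm⟩)]
          refine wfun_eq_none _ (fun y' hy' hx' => ?_)
          rcases hy' with ⟨hh1, hh2⟩ | ⟨hh1, hh2⟩
          · exact hs1 ⟨y', hh1, hx', hh2⟩
          · have hyy : y' = y := by
              by_contra hne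
              exact L.levelIndep j y' hh1 y h1 hne ⟨x, hx', h2⟩
            exact hh2 (hyy ▸ hm)
        · have hnsj : ¬ ∃ y0 : V, (y0, j) ∈ L.F.verts ∧ x ∈ Var E y0 ∧ Sh L a (y0, j) := by
            rintro ⟨y0, hh1, hh2, hh3⟩
            have hyy : y0 = y := by
              by_contra hne
              exact L.levelIndep j y0 hh1 y h1 hne ⟨x, hh2, h2⟩
            exact hm (hyy ▸ hh3)
          rw [wfun_eq_some L h1 h2, if_pos ⟨Option.isSome_some, hnsj⟩]
          have hv' : ((y, j) : V × ℕ) ∈ (shiftF L a haV hroot hpos hB).verts :=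
            Or.inr ⟨h1, hm⟩
          rw [wfun_eq_some _ hv' h2]
          exact congrArg some (shiftL_vio_unshifted haV hroot hpos hB h1 hm hv' h2)
      · rw [wfun_eq_none L (fun y hy hx => hw ⟨y, hy, hx⟩), if_neg (by simp)]
        refine wfun_eq_none _ (fun y' hy' hx' => ?_)
        rcases hy' with ⟨hh1, hh2⟩ | ⟨hh1, hh2⟩
        · exact hs1 ⟨y', hh1, hx', hh2⟩
        · exact hw ⟨y', hh1, hx'⟩
  · rintro x j ⟨y, h1, h2, hm⟩
    by_cases hw : ∃ y' : V, (y', j) ∈ L.F.verts ∧ x ∈ Var E y'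
    · obtain ⟨y', hy1, hy2⟩ := hw
      exact Or.inl ⟨y', hy1, hy2, Sh.key hB hm y' hy1 ⟨x, hy2, h2⟩⟩
    · exact Or.inr (wfun_eq_none L (fun y' hy1 hy2 => hw ⟨y', hy1, hy2⟩))
  · rintro x ⟨y, h1, h2, hm⟩
    exact Nat.lt_irrefl 0 (Sh.pos hpos hm)
  · rintro u (⟨h1, _⟩ | ⟨h1, _⟩)
    · have := Nat.find_spec L.finHeight _ h1
      simp only at this
      omega
    · exact Nat.find_spec L.finHeight u h1

lemma shiftMap_a : shiftMap L a a = (a.1, a.2 - 1) := by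
  rw [shiftMap]
  simp only [if_pos Sh.root]

lemma airborneRoots_shiftL :
    airborneRoots (shiftL L a haV hroot hpos hB).F =
      (airborneRoots L.F \ {a}) ∪ (if 1 < a.2 then {(a.1, a.2 - 1)} else ∅) := by
  have hinj := shiftMap_injOn (L := L) (a := a) haV hpos hB
  have hnoin : ∀ v ∈ L.F.verts,
      ((∀ u, ¬ shiftEdges L a u (shiftMap L a v)) ↔ (∀ p, ¬ L.F.edges p v)) := by
    intro v hvv
    constructor
    · intro h p hp
      exact h (newpar L a p v) ⟨p, v, hp, rfl, rfl⟩
    · rintro h u ⟨p, pc, he, hc, rfl⟩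
      have hpc : pc ∈ L.F.verts := L.F.edges_mem_right _ _ he
      have hpcv : pc = v := hinj hpc hvv hc.symm
      exact h p (hpcv ▸ he)
  ext u
  constructor
  · rintro ⟨huv, hne, hupos⟩
    rw [show (shiftL L a haV hroot hpos hB).F.verts = shiftVerts L a from rfl,
      shiftVerts_eq_image haV hpos] at huv
    obtain ⟨v, hvv, rfl⟩ := huv
    have hrootv : ∀ p, ¬ L.F.edges p v := (hnoin v hvv).1 hne
    by_cases hva : v = a
    · subst hva
      rw [shiftMap_a] at hupos ⊢
      right
      rw [if_pos (by simp only at hupos; omega)]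
      rfl
    · have hnsh : ¬ Sh L a v := fun h => hva (sh_of_root hroot hrootv h)
      have e : shiftMap L a v = v := by simp only [shiftMap, if_neg hnsh]
      rw [e] at hupos ⊢
      exact Or.inl ⟨⟨hvv, hrootv, hupos⟩, fun hmem => hva hmem⟩
  · rintro (⟨⟨huv, hne, hupos⟩, hna⟩ | hright)
    · have hnsh : ¬ Sh L a u := fun h => hna (sh_of_root hroot hne h)
      have e : shiftMap L a u = u := by simp only [shiftMap, if_neg hnsh]
      refine ⟨Or.inr ⟨huv, hnsh⟩, ?_, hupos⟩
      have := (hnoin u huv).2 hne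
      rw [e] at this
      exact this
    · by_cases h2 : 1 < a.2
      · rw [if_pos h2] at hright
        have hu : u = (a.1, a.2 - 1) := hright
        subst hu
        refine ⟨?_, ?_, by show 0 < a.2 - 1; omega⟩
        · rw [← shiftMap_a]
          exact shiftMap_mem haV hpos haV
        · have := (hnoin a haV).2 hroot
          rw [shiftMap_a] at this
          exact this
      · rw [if_neg h2] at hright
        exact absurd hright (Set.notMem_empty u)

end Shift3

lemma aux_decrease [Fintype V] : ∀ s : ℕ, ∀ L : FinLandscape E b R, ∀ a : V × ℕ,
    a ∈ airborneRoots L.F → a.2 = s →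
    ∃ L' : FinLandscape E b R,
      (L'.F.verts.ncard = L.F.verts.ncard ∧ L'.Used = L.Used) ∧
      (airborneRoots L'.F).ncard < (airborneRoots L.F).ncard := by
  intro s
  induction s using Nat.strong_induction_on with
  | _ s IH =>
    intro L a ha has
    obtain ⟨haV, hroot, hpos⟩ := ha
    by_cases hz : ∃ z : V, (z, a.2 - 1) ∈ L.F.verts ∧ Rel E z a.1
    · obtain ⟨z, hz1, hz2⟩ := hz
      exact attach_step L a ⟨haV, hroot, hpos⟩ z hz1 hz2
    · push_neg at hz
      have hA := airborneRoots_shiftL haV hroot hpos hz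
      by_cases h2 : 1 < a.2
      · have hmem : (a.1, a.2 - 1) ∈ airborneRoots (shiftL L a haV hroot hpos hz).F := by
          rw [hA, if_pos h2]
          exact Or.inr rfl
        have hfin := airborne_finite L
        have hpos' : 0 < (airborneRoots L.F).ncard :=
          (Set.ncard_pos hfin).2 (⟨a, haV, hroot, hpos⟩ : (airborneRoots L.F).Nonempty)
        have hle : (airborneRoots (shiftL L a haV hroot hpos hz).F).ncard ≤
            (airborneRoots L.F).ncard := by
          rw [hA, if_pos h2, Set.union_singleton]
          calc (insert (a.1, a.2 - 1) (airborneRoots L.F \ {a})).ncard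
              ≤ (airborneRoots L.F \ {a}).ncard + 1 :=
                Set.ncard_insert_le _ _
            _ = ((airborneRoots L.F).ncard - 1) + 1 := by
                rw [Set.ncard_diff_singleton_of_mem (show a ∈ airborneRoots L.F from ⟨haV, hroot, hpos⟩)]
            _ = (airborneRoots L.F).ncard := by omega
        obtain ⟨L', ⟨hn, hu⟩, hlt⟩ := IH (s - 1) (by omega) (shiftL L a haV hroot hpos hz)
          (a.1, a.2 - 1) hmem (show a.2 - 1 = s - 1 by omega)
        exact ⟨L', ⟨hn.trans (shiftL_ncard haV hroot hpos hz),
          hu.trans (shiftL_used haV hroot hpos hz)⟩, lt_of_lt_of_le hlt hle⟩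
      · refine ⟨shiftL L a haV hroot hpos hz,
          ⟨shiftL_ncard haV hroot hpos hz, shiftL_used haV hroot hpos hz⟩, ?_⟩
        rw [hA, if_neg h2, Set.union_empty]
        exact Set.ncard_diff_singleton_lt_of_mem ⟨haV, hroot, hpos⟩ (airborne_finite L)

end MTLLL
open MTLLL in
/-- Lemma 3.10: a finalised landscape with at least one airborne tree (a tree whose root
has positive level; roots are the in-degree-zero vertices of the forest) is equivalent to
one with strictly fewer airborne trees. -/
theorem decrease_airborne_trees
    {V : Type*} [Nonempty V] [Fintype V] (E : V → V → Prop)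
    (b : ℕ) (hb : 1 < b) (R : LocalRule E b) (L : FinLandscape E b R)
    (hpos : 0 < (airborneRoots L.F).ncard) :
    ∃ L' : FinLandscape E b R,
      (L'.F.verts.ncard = L.F.verts.ncard ∧ L'.Used = L.Used) ∧
      (airborneRoots L'.F).ncard < (airborneRoots L.F).ncard := by
  obtain ⟨a, ha⟩ := Set.nonempty_of_ncard_ne_zero (Nat.pos_iff_ne_zero.mp hpos)
  exact aux_decrease a.2 L a ha rfl
end

section
/- Let G be a digraph, let ε > 0 and let R ∈ ℕ₊ be such that |N_G(x,3R)| ≤ (1+ε)^R for every x ∈ V(G). Let h : V(G) → ℕ be a bounded function and let y ∈ V(G) satisfy h(y) = max_{x∈V(G)} h(x). Then there exists r ∈ {3,4,…,3R} such that Σ_{x∈N_G(y,r)} h(x) ≤ (1+ε)·Σ_{x∈N_G(y,r−3)} h(x). -/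
open MeasureTheory
open scoped Classical ENNReal

open MTLLL in
/-- Lemma 3.11: in a graph whose `3R`-balls have at most `(1+ε)^R` vertices, for a bounded
function `h` maximised at `y` there is a radius `r ∈ {3,…,3R}` at which the ball sums of
`h` grow by a factor of at most `1+ε` from radius `r-3` to `r`. -/
theorem exists_radius_small_growth
    {V : Type*} [Nonempty V] (E : V → V → Prop) (ε : ℝ) (hε : 0 < ε)
    (Rad : ℕ) (hRad : 0 < Rad)
    (hball : ∀ x : V, (ball E x (3 * Rad)).Finite ∧
      ((ball E x (3 * Rad)).ncard : ℝ) ≤ (1 + ε) ^ Rad)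
    (h : V → ℕ) (hbd : ∃ C : ℕ, ∀ x : V, h x ≤ C)
    (y : V) (hy : ∀ x : V, h x ≤ h y) :
    ∃ r : ℕ, 3 ≤ r ∧ r ≤ 3 * Rad ∧
      (∑ᶠ x ∈ ball E y r, (h x : ℝ)) ≤ (1 + ε) * ∑ᶠ x ∈ ball E y (r - 3), (h x : ℝ) := by
  by_contra hcon
  push_neg at hcon
  have hF : (ball E y (3 * Rad)).Finite := (hball y).1
  have hsub : ∀ r, r ≤ 3 * Rad → ball E y r ⊆ ball E y (3 * Rad) := by
    intro r hr z hz
    obtain ⟨p, hp⟩ := hz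
    exact ⟨p, hp.trans hr⟩
  have hfin : ∀ r, r ≤ 3 * Rad → (ball E y r).Finite := fun r hr => hF.subset (hsub r hr)
  have hy0 : y ∈ ball E y 0 := ⟨SimpleGraph.Walk.nil, le_refl 0⟩
  set S : ℕ → ℝ := fun r => ∑ᶠ x ∈ ball E y r, (h x : ℝ) with hS
  have hSeq : ∀ (r : ℕ) (hr : r ≤ 3 * Rad),
      S r = ∑ x ∈ (hfin r hr).toFinset, (h x : ℝ) := by
    intro r hr
    exact finsum_mem_eq_finite_toFinset_sum _ _
  have hpos : (0:ℝ) < 1 + ε := by linarith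
  have hmono : ∀ r r' : ℕ, r ≤ r' → r' ≤ 3 * Rad → S r ≤ S r' := by
    intro r r' hrr hr'
    rw [hSeq r (hrr.trans hr'), hSeq r' hr']
    apply Finset.sum_le_sum_of_subset_of_nonneg
    · intro z hz
      simp only [Set.Finite.mem_toFinset] at hz ⊢
      obtain ⟨p, hp⟩ := hz
      exact ⟨p, hp.trans hrr⟩
    · intro i _ _; positivity
  have hS0 : (h y : ℝ) ≤ S 0 := by
    rw [hSeq 0 (Nat.zero_le _)]
    refine Finset.single_le_sum (f := fun x => (h x : ℝ)) (fun i _ => by positivity) ?_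
    simpa using hy0
  -- key induction
  have key : ∀ k : ℕ, 1 ≤ k → k ≤ Rad → (1 + ε) ^ k * (h y : ℝ) < S (3 * k) := by
    intro k hk1 hkR
    induction k with
    | zero => omega
    | succ n ih =>
      have h3 : 3 * (n + 1) ≤ 3 * Rad := by omega
      have hc := hcon (3 * (n + 1)) (by omega) h3
      have heq : 3 * (n + 1) - 3 = 3 * n := by omega
      rw [heq] at hc
      rcases Nat.eq_zero_or_pos n with hn0 | hn1
      · subst hn0
        simp only [mul_zero] at hc
        calc (1 + ε) ^ 1 * (h y : ℝ) = (1 + ε) * (h y : ℝ) := by ring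
          _ ≤ (1 + ε) * S 0 := by
              exact mul_le_mul_of_nonneg_left hS0 (le_of_lt hpos)
          _ < S (3 * 1) := hc
      · have ihn := ih hn1 (by omega)
        calc (1 + ε) ^ (n + 1) * (h y : ℝ) = (1 + ε) * ((1 + ε) ^ n * (h y : ℝ)) := by ring
          _ < (1 + ε) * S (3 * n) := by
              exact (mul_lt_mul_iff_right₀ hpos).mpr ihn
          _ < S (3 * (n + 1)) := hc
  have hfinal := key Rad hRad le_rfl
  -- upper bound on S (3 * Rad)
  have hub : S (3 * Rad) ≤ ((ball E y (3 * Rad)).ncard : ℝ) * (h y : ℝ) := by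
    rw [hSeq (3 * Rad) le_rfl]
    have := Finset.sum_le_card_nsmul (hfin (3 * Rad) le_rfl).toFinset
      (fun x => (h x : ℝ)) (h y : ℝ) (fun x _ => Nat.cast_le.mpr (hy x))
    rw [nsmul_eq_mul] at this
    have hcard : ((hfin (3 * Rad) le_rfl).toFinset.card : ℝ)
        = ((ball E y (3 * Rad)).ncard : ℝ) := by
      rw [Set.ncard_eq_toFinset_card _ (hfin (3 * Rad) le_rfl)]
    rw [hcard] at this
    exact this
  have hhy : (0:ℝ) ≤ (h y : ℝ) := by positivity
  have : S (3 * Rad) ≤ (1 + ε) ^ Rad * (h y : ℝ) :=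
    hub.trans (mul_le_mul_of_nonneg_right (hball y).2 hhy)
  linarith
end

section
/- Let G be a Borel digraph with maxdeg(G) < ∞. Then for every r ∈ ℕ there exists a finite partition of V(G) into Borel sets which is r-sparse. -/
open MeasureTheory
open scoped Classical ENNReal

namespace SparseAux

open MTLLL


variable {V : Type*}

/-- Symmetric-reflexive one-step relation of the digraph. -/
def brel (E : V → V → Prop) (x y : V) : Prop := x = y ∨ E x y ∨ E y x

/-- `Srel E k x y` iff there is a chain of length `k` of `brel`-steps from `x` to `y`. -/
def Srel (E : V → V → Prop) : ℕ → V → V → Prop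
  | 0 => Eq
  | k+1 => fun x y => ∃ z, brel E x z ∧ Srel E k z y

/-- Composition of `k` of the functions `b i`. -/
def Gc {K : ℕ} (b : Fin K → V → V) : (m : ℕ) → (Fin m → Fin K) → V → V
  | 0, _ => id
  | m+1, w => fun x => Gc b m (fun i => w i.succ) (b (w 0) x)

/-- The greedy recolouring recursion. -/
def Dfun {α : Type*} (d0 : α) (c : V → ℕ) (pk : (V → α) → V → α) : ℕ → V → α
  | 0 => fun _ => d0
  | m+1 => fun x => if c x = m then pk (Dfun d0 c pk m) x else Dfun d0 c pk m x

theorem srel_succ_self {E : V → V → Prop} {k : ℕ} {x y : V} (h : Srel E k x y) :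
    Srel E (k+1) x y := by
  induction k generalizing x with
  | zero => exact ⟨y, Or.inl h, rfl⟩
  | succ k ih =>
    obtain ⟨z, hb, hs⟩ := h
    exact ⟨z, hb, ih hs⟩

theorem srel_of_le {E : V → V → Prop} {k m : ℕ} (hkm : k ≤ m) {x y : V}
    (h : Srel E k x y) : Srel E m x y := by
  induction m with
  | zero => exact (Nat.le_zero.1 hkm) ▸ h
  | succ m ih =>
    rcases Nat.lt_or_ge k (m+1) with hlt | hge
    · exact srel_succ_self (ih (Nat.lt_succ_iff.1 hlt))
    · exact (le_antisymm hkm hge) ▸ h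

theorem walk_srel {E : V → V → Prop} {x y : V} (p : (MTLLL.toSG E).Walk x y) :
    Srel E p.length x y := by
  induction p with
  | nil => rfl
  | @cons x z y h p ih => exact ⟨z, Or.inr h.2, ih⟩

theorem ball_iff_srel {E : V → V → Prop} {k : ℕ} {x y : V} :
    y ∈ MTLLL.ball E x k ↔ Srel E k x y := by
  constructor
  · rintro ⟨p, hp⟩
    exact srel_of_le hp (walk_srel p)
  · intro h
    induction k generalizing x with
    | zero => exact h ▸ ⟨SimpleGraph.Walk.nil, le_refl 0⟩
    | succ k ih =>
      obtain ⟨z, hb, hs⟩ := h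
      obtain ⟨p, hp⟩ := ih hs
      by_cases hxz : x = z
      · subst hxz
        exact ⟨p, Nat.le_succ_of_le hp⟩
      · have hadj : (MTLLL.toSG E).Adj x z := by
          refine ⟨hxz, ?_⟩
          rcases hb with h1 | h2
          · exact absurd h1 hxz
          · exact h2
        exact ⟨SimpleGraph.Walk.cons hadj p, by simpa using Nat.succ_le_succ hp⟩

theorem ball_symm {E : V → V → Prop} {k : ℕ} {x y : V} (h : y ∈ MTLLL.ball E x k) :
    x ∈ MTLLL.ball E y k := by
  obtain ⟨p, hp⟩ := h
  exact ⟨p.reverse, by rwa [SimpleGraph.Walk.length_reverse]⟩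

theorem gc_measurable {K : ℕ} [MeasurableSpace V] {b : Fin K → V → V}
    (hb : ∀ i, Measurable (b i)) : ∀ (m : ℕ) (w : Fin m → Fin K), Measurable (Gc b m w) := by
  intro m
  induction m with
  | zero => intro w; exact measurable_id
  | succ m ih => intro w; exact (ih (fun i => w i.succ)).comp (hb (w 0))

theorem srel_exists_w {E : V → V → Prop} {K : ℕ} {b : Fin K → V → V}
    (hcov : ∀ x y, brel E x y → ∃ i, b i x = y) :
    ∀ (k : ℕ) (x y : V), Srel E k x y → ∃ w : Fin k → Fin K, Gc b k w x = y := by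
  intro k
  induction k with
  | zero => intro x y h; exact ⟨Fin.elim0, h⟩
  | succ k ih =>
    intro x y h
    obtain ⟨z, hb, hs⟩ := h
    obtain ⟨i, hi⟩ := hcov x z hb
    obtain ⟨w', hw'⟩ := ih z y hs
    refine ⟨Fin.cons i w', ?_⟩
    show Gc b k (fun j => (Fin.cons i w' : Fin (k+1) → Fin K) j.succ)
      (b ((Fin.cons i w' : Fin (k+1) → Fin K) 0) x) = y
    simp only [Fin.cons_succ, Fin.cons_zero]
    rw [hi, hw']

theorem measurableSet_eq_of_emb {α W : Type*} [MeasurableSpace α] [MeasurableSpace W]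
    {e : W → ℝ} (he : MeasurableEmbedding e) {f g : α → W}
    (hf : Measurable f) (hg : Measurable g) : MeasurableSet {x | f x = g x} := by
  have h : {x | f x = g x} = {x | e (f x) = e (g x)} := by
    ext x; exact ⟨fun h => congrArg e h, fun h => he.injective h⟩
  rw [h]
  exact measurableSet_eq_fun (he.measurable.comp hf) (he.measurable.comp hg)

theorem exists_rat_io (a : ℝ) (T : Finset ℝ) (ha : a ∉ T) :
    ∃ q₁ q₂ : ℚ, (q₁:ℝ) < a ∧ a < (q₂:ℝ) ∧ ∀ t ∈ T, t ∉ Set.Ioo (q₁:ℝ) (q₂:ℝ) := by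
  have h1 : ∃ a₁ : ℝ, a₁ < a ∧ ∀ t ∈ T, t < a → t ≤ a₁ := by
    by_cases h : (T.filter (fun t => t < a)).Nonempty
    · refine ⟨(T.filter (fun t => t < a)).max' h, ?_, ?_⟩
      · have := Finset.max'_mem _ h
        exact (Finset.mem_filter.1 this).2
      · intro t ht hlt
        have hmem : t ∈ T.filter (fun t => t < a) := Finset.mem_filter.2 ⟨ht, hlt⟩
        exact Finset.le_max' _ t hmem
    · refine ⟨a - 1, by linarith, ?_⟩
      intro t ht hlt
      exact absurd ⟨t, Finset.mem_filter.2 ⟨ht, hlt⟩⟩ h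
  have h2 : ∃ a₂ : ℝ, a < a₂ ∧ ∀ t ∈ T, a < t → a₂ ≤ t := by
    by_cases h : (T.filter (fun t => a < t)).Nonempty
    · refine ⟨(T.filter (fun t => a < t)).min' h, ?_, ?_⟩
      · have := Finset.min'_mem _ h
        exact (Finset.mem_filter.1 this).2
      · intro t ht hlt
        have hmem : t ∈ T.filter (fun t => a < t) := Finset.mem_filter.2 ⟨ht, hlt⟩
        exact Finset.min'_le _ t hmem
    · refine ⟨a + 1, by linarith, ?_⟩
      intro t ht hlt
      exact absurd ⟨t, Finset.mem_filter.2 ⟨ht, hlt⟩⟩ h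
  obtain ⟨a₁, ha₁, hle₁⟩ := h1
  obtain ⟨a₂, ha₂, hle₂⟩ := h2
  obtain ⟨q₁, hq₁a, hq₁b⟩ := exists_rat_btwn ha₁
  obtain ⟨q₂, hq₂a, hq₂b⟩ := exists_rat_btwn ha₂
  refine ⟨q₁, q₂, hq₁b, hq₂a, ?_⟩
  rintro t ht ⟨hl, hr⟩
  rcases lt_trichotomy t a with hlt | heq | hgt
  · exact absurd hl (not_lt.2 (le_trans (hle₁ t ht hlt) (le_of_lt hq₁a)))
  · exact ha (heq ▸ ht)
  · exact absurd hr (not_lt.2 (le_trans (le_of_lt hq₂b) (hle₂ t ht hgt)))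


section key
variable {V : Type*} [Nonempty V] [MeasurableSpace V] [StandardBorelSpace V]


theorem key_decomp : ∀ (k : ℕ) (S : V → V → Prop),
    MeasurableSet {p : V × V | S p.1 p.2} →
    (∀ x, {y | S x y}.encard ≤ (k : ℕ∞)) →
    ∃ f : Fin k → V → V, (∀ i, Measurable (f i)) ∧ ∀ x y, S x y → ∃ i, f i x = y := by
  intro k
  induction k with
  | zero =>
    intro S hS hc
    refine ⟨fun _ => id, fun _ => measurable_id, fun x y hxy => ?_⟩
    have h0 : {y | S x y} = ∅ := by
      have := hc x
      simpa [Set.encard_eq_zero] using le_antisymm this (zero_le)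
    exact absurd hxy (Set.eq_empty_iff_forall_notMem.1 h0 y)
  | succ k ih =>
    intro S hS hc
    obtain ⟨e, he⟩ := MeasureTheory.exists_measurableEmbedding_real V
    set Q : Set (V × (Fin (k+1) → V)) :=
      (⋂ (i : Fin (k+1)) (j : Fin (k+1)) (_ : i < j),
        {p : V × (Fin (k+1) → V) | e (p.2 i) < e (p.2 j)}) ∩
      (⋂ (i : Fin (k+1)), {p : V × (Fin (k+1) → V) | S p.1 (p.2 i)}) with hQdef
    have hQmem : ∀ p : V × (Fin (k+1) → V),
        p ∈ Q ↔ (StrictMono fun i => e (p.2 i)) ∧ ∀ i, S p.1 (p.2 i) := by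
      intro p
      simp only [hQdef, Set.mem_inter_iff, Set.mem_iInter, Set.mem_setOf_eq]
      constructor
      · rintro ⟨h1, h2⟩
        exact ⟨fun i j hij => h1 i j hij, h2⟩
      · rintro ⟨h1, h2⟩
        exact ⟨fun i j hij => h1 hij, h2⟩
    have hQ : MeasurableSet Q := by
      apply MeasurableSet.inter
      · refine MeasurableSet.iInter fun i => MeasurableSet.iInter fun j =>
          MeasurableSet.iInter fun _ => ?_
        exact measurableSet_lt
          (he.measurable.comp ((measurable_pi_apply i).comp measurable_snd))
          (he.measurable.comp ((measurable_pi_apply j).comp measurable_snd))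
      · refine MeasurableSet.iInter fun i => ?_
        exact MeasurableSet.preimage hS
          (measurable_fst.prodMk ((measurable_pi_apply i).comp measurable_snd))
    -- range of a strictly increasing tuple of S-related elements is the full section
    have hrange : ∀ (x : V) (g : Fin (k+1) → V), StrictMono (fun i => e (g i)) →
        (∀ i, S x (g i)) → Set.range g = {y | S x y} := by
      intro x g hsm hrel
      have hginj : Function.Injective g := by
        intro a b hab
        by_contra hne
        rcases lt_or_gt_of_ne hne with h | h
        · exact absurd (congrArg e hab) (ne_of_lt (hsm h))
        · exact absurd (congrArg e hab).symm (ne_of_lt (hsm h))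
      have hsub : Set.range g ⊆ {y | S x y} := by
        rintro y ⟨i, rfl⟩; exact hrel i
      have hcard : ((k:ℕ∞) + 1) ≤ (Set.range g).encard := by
        have : Set.range g = g '' Set.univ := by rw [Set.image_univ]
        rw [this, hginj.encard_image, Set.encard_univ]
        simp
      refine ((Set.finite_range g).eq_of_subset_of_encard_le hsub ?_)
      exact le_trans (by exact_mod_cast hc x) hcard
    set π : Q → V := fun q => q.1.1 with hπdef
    have hπm : Measurable π := measurable_fst.comp measurable_subtype_coe
    have hπinj : Function.Injective π := by
      rintro ⟨⟨x, g⟩, hq⟩ ⟨⟨x', g'⟩, hq'⟩ h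
      have hx : x = x' := h
      subst hx
      obtain ⟨hsm, hrel⟩ := (hQmem _).1 hq
      obtain ⟨hsm', hrel'⟩ := (hQmem _).1 hq'
      have h1 : Set.range (fun i => e (g i)) = Set.range (fun i => e (g' i)) := by
        have : ∀ (gg : Fin (k+1) → V), Set.range (fun i => e (gg i)) = e '' Set.range gg := by
          intro gg; rw [← Set.range_comp]; rfl
        rw [this g, this g', hrange x g hsm hrel, hrange x g' hsm' hrel']
      haveI : WellFoundedLT (Fin (k + 1)) := Finite.to_wellFoundedLT
      have := (hsm.range_inj hsm').1 h1
      have hgg : g = g' := funext fun i => he.injective (congrFun this i)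
      subst hgg
      rfl
    haveI : MeasurableSpace.CountablySeparated V := by infer_instance
    haveI := hQ.standardBorel
    have hemb : MeasurableEmbedding π := hπm.measurableEmbedding hπinj
    set A : Set V := Set.range π with hAdef
    have hA : MeasurableSet A := hemb.measurableSet_range
    -- vertices not in A have small sections
    have hsmall : ∀ x : V, x ∉ A → {y | S x y}.encard ≤ (k : ℕ∞) := by
      intro x hx
      by_contra hlt
      apply hx
      rw [not_le] at hlt
      have hk1 : ((k+1 : ℕ) : ℕ∞) ≤ {y | S x y}.encard := by
        rw [Nat.cast_add, Nat.cast_one]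
        exact (ENat.add_one_le_iff (n := {y | S x y}.encard) (by simp)).2 hlt
      obtain ⟨t, hts, htcard⟩ := Set.exists_subset_encard_eq hk1
      have htfin : t.Finite := Set.finite_of_encard_eq_coe htcard
      have htoF : (htfin.toFinset.image e).card = k + 1 := by
        rw [Finset.card_image_of_injective _ he.injective]
        have := htfin.encard_eq_coe_toFinset_card
        rw [htcard] at this
        exact_mod_cast this.symm
      set u := (htfin.toFinset.image e).orderEmbOfFin htoF with hudef
      have hmem : ∀ i, ∃ v, v ∈ t ∧ e v = u i := by
        intro i
        have := (htfin.toFinset.image e).orderEmbOfFin_mem htoF i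
        rw [Finset.mem_image] at this
        obtain ⟨v, hv, hev⟩ := this
        exact ⟨v, htfin.mem_toFinset.1 hv, hev⟩
      choose g hgt hge using hmem
      have hQg : (x, g) ∈ Q := by
        rw [hQmem]
        constructor
        · have : (fun i => e (g i)) = fun i => u i := funext fun i => hge i
          rw [this]
          exact u.strictMono
        · intro i; exact hts (hgt i)
      exact ⟨⟨(x, g), hQg⟩, rfl⟩
    -- coordinate extensions
    have hext : ∀ i : Fin (k+1), ∃ h : V → V, Measurable h ∧ h ∘ π = fun q => q.1.2 i := by
      intro i
      exact hemb.exists_measurable_extend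
        ((measurable_pi_apply i).comp (measurable_snd.comp measurable_subtype_coe))
        (fun _ => ‹Nonempty V›)
    choose H Hm Hspec using hext
    -- induction hypothesis on the complement
    obtain ⟨f', hf'm, hf'cov⟩ := ih (fun x y => S x y ∧ x ∉ A)
      (by
        have : {p : V × V | S p.1 p.2 ∧ p.1 ∉ A} = {p : V × V | S p.1 p.2} ∩ (Prod.fst ⁻¹' Aᶜ) := rfl
        rw [this]
        exact hS.inter (measurable_fst hA.compl))
      (by
        intro x
        by_cases hx : x ∈ A
        · have : {y | S x y ∧ x ∉ A} = ∅ := by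
            ext y; simp [hx]
          simp [this]
        · have : {y | S x y ∧ x ∉ A} = {y | S x y} := by
            ext y; simp [hx]
          rw [this]; exact hsmall x hx)
    refine ⟨fun i x => if x ∈ A then H i x else if h : (i:ℕ) < k then f' ⟨i, h⟩ x else x,
      ?_, ?_⟩
    · intro i
      by_cases h : (i:ℕ) < k
      · simp only [h, dif_pos]
        exact Measurable.ite hA (Hm i) (hf'm _)
      · simp only [h, dif_neg, not_false_iff]
        exact Measurable.ite hA (Hm i) measurable_id
    · intro x y hxy
      by_cases hx : x ∈ A
      · obtain ⟨q, hq⟩ := hx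
        obtain ⟨⟨x', g⟩, hqmem⟩ := q
        have hx' : x' = x := hq
        subst hx'
        obtain ⟨hsm, hrel⟩ := (hQmem _).1 hqmem
        have : y ∈ Set.range g := by
          rw [hrange x' g hsm hrel]; exact hxy
        obtain ⟨i, hi⟩ := this
        refine ⟨i, ?_⟩
        have hxA : x' ∈ A := ⟨⟨(x', g), hqmem⟩, rfl⟩
        simp only [hxA, if_pos]
        have := congrFun (Hspec i) ⟨(x', g), hqmem⟩
        simpa [hi] using this
      · obtain ⟨j, hj⟩ := hf'cov x y ⟨hxy, hx⟩
        refine ⟨⟨(j:ℕ), Nat.lt_succ_of_lt j.isLt⟩, ?_⟩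
        simp only [hx, if_neg, not_false_iff]
        have hlt : ((j:ℕ) : ℕ) < k := j.isLt
        simp only [hlt, dif_pos]
        convert hj using 2


end key

end SparseAux

open SparseAux

open MTLLL in
/-- Lemma 4.1: a Borel digraph of finite maximal degree admits, for every `r`, a finite
Borel `r`-sparse partition. -/
theorem exists_borel_sparse_partition
    {V : Type*} [Nonempty V] [MeasurableSpace V] [StandardBorelSpace V]
    (E : V → V → Prop) (hE : MeasurableSet {p : V × V | E p.1 p.2})
    (hdeg : maxdeg E < ⊤) (r : ℕ) :
    ∃ (n : ℕ) (part : V → Fin n), Measurable part ∧ Sparse E part r := by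
  classical
  obtain ⟨e, he⟩ := MeasureTheory.exists_measurableEmbedding_real V
  -- a uniform degree bound
  obtain ⟨d, hd⟩ : ∃ d : ℕ, maxdeg E ≤ (d : ℕ∞) := by
    obtain ⟨d, hd⟩ := WithTop.ne_top_iff_exists.1 hdeg.ne
    exact ⟨d, le_of_eq hd.symm⟩
  have hbrel_card : ∀ x, {y | brel E x y}.encard ≤ ((d+1 : ℕ) : ℕ∞) := by
    intro x
    have hsub : {y | brel E x y} ⊆ insert x (Nbr E x) := by
      rintro y (rfl | h | h)
      · exact Set.mem_insert _ _
      · exact Set.mem_insert_of_mem _ (Set.mem_union_left _ h)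
      · exact Set.mem_insert_of_mem _ (Set.mem_union_right _ h)
    refine le_trans (Set.encard_mono hsub) (le_trans (Set.encard_insert_le _ _) ?_)
    have hx : (Nbr E x).encard ≤ maxdeg E := le_iSup (fun x => (Nbr E x).encard) x
    calc (Nbr E x).encard + 1 ≤ (d : ℕ∞) + 1 := add_le_add_left (le_trans hx hd) 1
    _ = ((d+1 : ℕ) : ℕ∞) := by rw [Nat.cast_add, Nat.cast_one]
  have hbrelMeas : MeasurableSet {p : V × V | brel E p.1 p.2} := by
    have h1 : MeasurableSet {p : V × V | p.1 = p.2} :=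
      measurableSet_eq_of_emb he measurable_fst measurable_snd
    have h2 : MeasurableSet {p : V × V | E p.2 p.1} :=
      MeasurableSet.preimage hE measurable_swap
    have hsplit : {p : V × V | brel E p.1 p.2}
        = {p : V × V | p.1 = p.2} ∪ ({p : V × V | E p.1 p.2} ∪ {p : V × V | E p.2 p.1}) := rfl
    rw [hsplit]
    exact h1.union (hE.union h2)
  obtain ⟨b, hbmeas, hbcov⟩ := key_decomp (d+1) (brel E) hbrelMeas hbrel_card
  set ρ := 2 * r with hρ
  -- measurability of the iterated relation
  have hSrelMeas : ∀ k, MeasurableSet {p : V × V | Srel E k p.1 p.2} := by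
    intro k
    induction k with
    | zero => exact measurableSet_eq_of_emb he measurable_fst measurable_snd
    | succ k ih =>
      have heq : {p : V × V | Srel E (k+1) p.1 p.2}
          = ⋃ i : Fin (d+1), ((fun p : V × V => (p.1, b i p.1)) ⁻¹' {p : V × V | brel E p.1 p.2}
              ∩ (fun p : V × V => (b i p.1, p.2)) ⁻¹' {p : V × V | Srel E k p.1 p.2}) := by
        ext ⟨x, y⟩
        simp only [Set.mem_iUnion, Set.mem_inter_iff, Set.mem_preimage, Set.mem_setOf_eq]
        constructor
        · rintro ⟨z, hbz, hs⟩
          obtain ⟨i, hi⟩ := hbcov x z hbz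
          exact ⟨i, by rw [hi]; exact hbz, by rw [hi]; exact hs⟩
        · rintro ⟨i, h1, h2⟩
          exact ⟨b i x, h1, h2⟩
      rw [heq]
      refine MeasurableSet.iUnion fun i => MeasurableSet.inter ?_ ?_
      · exact MeasurableSet.preimage hbrelMeas
          (measurable_fst.prodMk ((hbmeas i).comp measurable_fst))
      · exact MeasurableSet.preimage ih
          (((hbmeas i).comp measurable_fst).prodMk measurable_snd)
  have hGmeas : ∀ w : Fin ρ → Fin (d+1), Measurable (Gc b ρ w) :=
    fun w => gc_measurable hbmeas ρ w
  have hGcov : ∀ x y, Srel E ρ x y → ∃ w : Fin ρ → Fin (d+1), Gc b ρ w x = y :=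
    fun x y h => srel_exists_w hbcov ρ x y h
  -- the countable colouring
  let dec : ℕ → ℚ × ℚ := Function.invFun (Encodable.encode : ℚ × ℚ → ℕ)
  let J : ℕ → Set ℝ := fun m => Set.Ioo (((dec m).1 : ℝ)) (((dec m).2 : ℝ))
  let P : ℕ → V → Prop := fun m x => e x ∈ J m ∧
    ∀ w : Fin ρ → Fin (d+1), Gc b ρ w x ≠ x → e (Gc b ρ w x) ∉ J m
  have cex : ∀ x : V, ∃ m : ℕ, P m x := by
    intro x
    set T : Finset ℝ :=
      ((Finset.univ.image (fun w : Fin ρ → Fin (d+1) => e (Gc b ρ w x))).erase (e x)) with hT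
    have haT : e x ∉ T := Finset.notMem_erase _ _
    obtain ⟨q₁, q₂, h1, h2, h3⟩ := exists_rat_io (e x) T haT
    have hofNat : dec (Encodable.encode (q₁, q₂)) = (q₁, q₂) :=
      Function.leftInverse_invFun Encodable.encode_injective _
    refine ⟨Encodable.encode (q₁, q₂), ?_, ?_⟩
    · show e x ∈ Set.Ioo (((dec (Encodable.encode (q₁, q₂))).1 : ℝ))
        (((dec (Encodable.encode (q₁, q₂))).2 : ℝ))
      rw [hofNat]
      exact ⟨h1, h2⟩
    · intro w hw
      have hmem : e (Gc b ρ w x) ∈ T := by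
        rw [hT]
        refine Finset.mem_erase.2 ⟨fun h => hw (he.injective h), ?_⟩
        exact Finset.mem_image.2 ⟨w, Finset.mem_univ _, rfl⟩
      intro hcon
      refine h3 _ hmem ?_
      have hcon' : e (Gc b ρ w x) ∈ Set.Ioo (((dec (Encodable.encode (q₁, q₂))).1 : ℝ))
        (((dec (Encodable.encode (q₁, q₂))).2 : ℝ)) := hcon
      rwa [hofNat] at hcon'
  let c : V → ℕ := fun x => Nat.find (cex x)
  have hPmeas : ∀ m, MeasurableSet {x : V | P m x} := by
    intro m
    have hsplit : {x : V | P m x} = (e ⁻¹' J m) ∩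
        ⋂ w : Fin ρ → Fin (d+1), ({x : V | Gc b ρ w x = x} ∪ (fun x => e (Gc b ρ w x)) ⁻¹' (J m)ᶜ) := by
      ext x
      simp only [Set.mem_inter_iff, Set.mem_iInter, Set.mem_union, Set.mem_preimage,
        Set.mem_setOf_eq, Set.mem_compl_iff]
      constructor
      · rintro ⟨hx, hall⟩
        refine ⟨hx, fun w => ?_⟩
        by_cases hfix : Gc b ρ w x = x
        · exact Or.inl hfix
        · exact Or.inr (hall w hfix)
      · rintro ⟨hx, hall⟩
        refine ⟨hx, fun w hfix => ?_⟩
        rcases hall w with h | h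
        · exact absurd h hfix
        · exact h
    rw [hsplit]
    refine MeasurableSet.inter (he.measurable measurableSet_Ioo) ?_
    refine MeasurableSet.iInter fun w => MeasurableSet.union ?_ ?_
    · exact measurableSet_eq_of_emb he (hGmeas w) measurable_id
    · exact MeasurableSet.preimage measurableSet_Ioo.compl (he.measurable.comp (hGmeas w))
  have hcmeas : Measurable c := by
    apply measurable_to_countable'
    intro m
    have hsplit : c ⁻¹' {m} = {x : V | P m x} ∩ ⋂ (j : ℕ), ⋂ (_ : j < m), {x : V | P j x}ᶜ := by
      ext x
      simp only [Set.mem_preimage, Set.mem_singleton_iff, Set.mem_inter_iff, Set.mem_iInter,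
        Set.mem_compl_iff, Set.mem_setOf_eq]
      exact Nat.find_eq_iff (cex x)
    rw [hsplit]
    exact (hPmeas m).inter (MeasurableSet.iInter fun j =>
      MeasurableSet.iInter fun _ => (hPmeas j).compl)
  have hcprop : ∀ x y, Srel E ρ x y → x ≠ y → c x ≠ c y := by
    intro x y hs hne heq
    obtain ⟨w, hw⟩ := hGcov x y hs
    have h1 := (Nat.find_spec (cex x)).2 w (by rw [hw]; exact fun h => hne h.symm)
    rw [hw] at h1
    have h2 := (Nat.find_spec (cex y)).1
    have heq' : Nat.find (cex y) = Nat.find (cex x) := heq.symm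
    rw [heq'] at h2
    exact h1 h2
  -- the finite recolouring
  set M := Fintype.card (Fin ρ → Fin (d+1)) with hM
  have havail : ∀ s : Finset (Fin (M+1)), s.card ≤ M → (Finset.univ \ s).Nonempty := by
    intro s hs
    rw [Finset.sdiff_nonempty]
    intro hsub
    have h1 := Finset.card_le_card hsub
    rw [Finset.card_univ, Fintype.card_fin] at h1
    omega
  let excl : (V → Fin (M+1)) → V → Finset (Fin (M+1)) := fun g x =>
    (Finset.univ.filter (fun w : Fin ρ → Fin (d+1) =>
      Gc b ρ w x ≠ x ∧ Srel E ρ x (Gc b ρ w x) ∧ c (Gc b ρ w x) < c x)).image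
      (fun w => g (Gc b ρ w x))
  let data : (V → Fin (M+1)) → V → ((Fin ρ → Fin (d+1)) → Bool × Fin (M+1)) := fun g x w =>
    (if Gc b ρ w x ≠ x ∧ Srel E ρ x (Gc b ρ w x) ∧ c (Gc b ρ w x) < c x then true else false,
      g (Gc b ρ w x))
  have hbound : ∀ t : (Fin ρ → Fin (d+1)) → Bool × Fin (M+1),
      ((Finset.univ.filter (fun w => (t w).1 = true)).image (fun w => (t w).2)).card ≤ M := by
    intro t
    refine le_trans Finset.card_image_le (le_trans (Finset.card_filter_le _ _) ?_)
    rw [Finset.card_univ]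
  let φ : ((Fin ρ → Fin (d+1)) → Bool × Fin (M+1)) → Fin (M+1) := fun t =>
    (Finset.univ \ (Finset.univ.filter (fun w => (t w).1 = true)).image (fun w => (t w).2)).min'
      (havail _ (hbound t))
  let pk : (V → Fin (M+1)) → V → Fin (M+1) := fun g x => φ (data g x)
  have hdata_set : ∀ g x,
      (Finset.univ.filter (fun w => (data g x w).1 = true)).image (fun w => (data g x w).2)
        = excl g x := by
    intro g x
    have hfilter : (Finset.univ.filter (fun w => (data g x w).1 = true))
        = (Finset.univ.filter (fun w : Fin ρ → Fin (d+1) =>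
            Gc b ρ w x ≠ x ∧ Srel E ρ x (Gc b ρ w x) ∧ c (Gc b ρ w x) < c x)) := by
      apply Finset.filter_congr
      intro w _
      show (if Gc b ρ w x ≠ x ∧ Srel E ρ x (Gc b ρ w x) ∧ c (Gc b ρ w x) < c x
          then true else false) = true ↔ _
      by_cases h : Gc b ρ w x ≠ x ∧ Srel E ρ x (Gc b ρ w x) ∧ c (Gc b ρ w x) < c x
      · simp [h]
      · simp [h]
    rw [hfilter]
  have hpk_not : ∀ g x, pk g x ∉ excl g x := by
    intro g x
    rw [← hdata_set g x]
    have h1 := Finset.min'_mem _ (havail _ (hbound (data g x)))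
    exact (Finset.mem_sdiff.1 h1).2
  have hpkMeas : ∀ g : V → Fin (M+1), Measurable g → Measurable (pk g) := by
    intro g hg
    have hcondMeas : ∀ w : Fin ρ → Fin (d+1), MeasurableSet
        {x : V | Gc b ρ w x ≠ x ∧ Srel E ρ x (Gc b ρ w x) ∧ c (Gc b ρ w x) < c x} := by
      intro w
      refine MeasurableSet.inter (measurableSet_eq_of_emb he (hGmeas w) measurable_id).compl
        (MeasurableSet.inter ?_ ?_)
      · exact MeasurableSet.preimage (hSrelMeas ρ) (measurable_id.prodMk (hGmeas w))
      · have hm : Measurable (fun x => (c (Gc b ρ w x), c x)) :=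
          (hcmeas.comp (hGmeas w)).prodMk hcmeas
        exact MeasurableSet.preimage
          ((Set.to_countable {p : ℕ × ℕ | p.1 < p.2}).measurableSet) hm
    have hdata : Measurable (data g) := by
      apply measurable_pi_lambda
      intro w
      apply Measurable.prodMk
      · exact Measurable.ite (hcondMeas w) measurable_const measurable_const
      · exact hg.comp (hGmeas w)
    haveI : MeasurableSingletonClass ((Fin ρ → Fin (d+1)) → Bool × Fin (M+1)) := by
      constructor
      intro t
      have hsingle : ({t} : Set ((Fin ρ → Fin (d+1)) → Bool × Fin (M+1)))
          = ⋂ w, (fun u : (Fin ρ → Fin (d+1)) → Bool × Fin (M+1) => u w) ⁻¹' {t w} := by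
        ext u
        simp [funext_iff]
      rw [hsingle]
      exact MeasurableSet.iInter fun w => (measurable_pi_apply w) (measurableSet_singleton _)
    exact (measurable_of_countable φ).comp hdata
  let D : ℕ → V → Fin (M+1) := Dfun ⟨0, Nat.succ_pos M⟩ c pk
  have hDsucc : ∀ (m : ℕ) (x : V), D (m+1) x = if c x = m then pk (D m) x else D m x :=
    fun m x => rfl
  have hDmeas : ∀ m, Measurable (D m) := by
    intro m
    induction m with
    | zero => exact measurable_const
    | succ m ih =>
      have : D (m+1) = fun x => if c x = m then pk (D m) x else D m x := funext (hDsucc m)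
      rw [this]
      exact Measurable.ite (hcmeas (measurableSet_singleton m)) (hpkMeas _ ih) ih
  have hDstab : ∀ (m : ℕ) (x : V), c x < m → D m x = D (c x + 1) x := by
    intro m
    induction m with
    | zero => intro x hx; exact absurd hx (Nat.not_lt_zero _)
    | succ m ih =>
      intro x hx
      rcases Nat.lt_or_ge (c x) m with h | h
      · rw [hDsucc m x, if_neg (by omega), ih x h]
      · have hcx : c x = m := by omega
        rw [hcx]
  let part : V → Fin (M+1) := fun x => D (c x + 1) x
  have hpartMeas : Measurable part := by
    apply measurable_to_countable'
    intro k
    have hsplit : part ⁻¹' {k} = ⋃ m : ℕ, (c ⁻¹' {m} ∩ D (m+1) ⁻¹' {k}) := by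
      ext x
      simp only [Set.mem_preimage, Set.mem_singleton_iff, Set.mem_iUnion, Set.mem_inter_iff]
      constructor
      · intro h
        exact ⟨c x, rfl, h⟩
      · rintro ⟨m, hm, h⟩
        show D (c x + 1) x = k
        rw [hm]
        exact h
    rw [hsplit]
    exact MeasurableSet.iUnion fun m =>
      (hcmeas (measurableSet_singleton m)).inter (hDmeas (m+1) (measurableSet_singleton k))
  have hmain : ∀ x y, Srel E ρ x y → x ≠ y → c y < c x → part x ≠ part y := by
    intro x y hs hne hlt heq
    have hx : part x = pk (D (c x)) x := by
      show D (c x + 1) x = _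
      rw [hDsucc (c x) x, if_pos rfl]
    have hy : part y ∈ excl (D (c x)) x := by
      obtain ⟨w, hw⟩ := hGcov x y hs
      refine Finset.mem_image.2 ⟨w, Finset.mem_filter.2 ⟨Finset.mem_univ _, ?_, ?_, ?_⟩, ?_⟩
      · rw [hw]; exact fun h => hne h.symm
      · rw [hw]; exact hs
      · rw [hw]; exact hlt
      · rw [hw]
        exact hDstab (c x) y hlt
    have hnot := hpk_not (D (c x)) x
    rw [← hx] at hnot
    rw [heq] at hnot
    exact hnot hy
  refine ⟨M + 1, part, hpartMeas, ?_⟩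
  intro x y hp hne hball
  have h1 : Srel E ρ x y := ball_iff_srel.1 hball
  have h2 : Srel E ρ y x := ball_iff_srel.1 (ball_symm hball)
  have hcc := hcprop x y h1 hne
  rcases Nat.lt_or_ge (c y) (c x) with h | h
  · exact hmain x y h1 hne h hp
  · have hlt : c x < c y := by omega
    exact hmain y x h2 (fun hxy => hne hxy.symm) hlt hp.symm
end

section
/- Let G be a Borel digraph with maxdeg(G) < ∞. Then for every Borel set A ⊆ V(G) there exists a set B ⊆ A that is a maximal independent (in G) subset of A and is a Borel subset of V(G). -/
open MeasureTheory
open scoped Classical ENNReal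

namespace BMIAux
open Set MeasureTheory
open MTLLL

variable {W : Type*} [MeasurableSpace W] [StandardBorelSpace W]

/-- Bounded-section Lusin–Novikov: the projection of a Borel set with sections of
size at most `n` is Borel. -/
theorem proj_meas : ∀ (n : ℕ) (S : Set (W × W)), MeasurableSet S →
    (∀ x : W, {y | (x, y) ∈ S}.encard ≤ (n : ℕ∞)) → MeasurableSet (Prod.fst '' S) := by
  intro n
  induction n with
  | zero =>
    intro S hS hsec
    have hempty : S = ∅ := by
      ext ⟨x, y⟩
      simp only [mem_empty_iff_false, iff_false]
      intro hxy
      have h1 : {y | (x, y) ∈ S}.encard = 0 :=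
        le_antisymm (by simpa using hsec x) zero_le
      rw [Set.encard_eq_zero] at h1
      exact absurd h1 (Set.nonempty_iff_ne_empty.mp ⟨y, hxy⟩)
    simp [hempty]
  | succ n ih =>
    intro S hS hsec
    obtain ⟨e, he⟩ := exists_measurableEmbedding_real W
    set T : Set (W × (Fin (n+1) → W)) :=
      {p | (∀ i, (p.1, p.2 i) ∈ S) ∧ ∀ i j : Fin (n+1), i < j → e (p.2 i) < e (p.2 j)}
      with hTdef
    have hTmeas : MeasurableSet T := by
      have h1 : MeasurableSet {p : W × (Fin (n+1) → W) | ∀ i, (p.1, p.2 i) ∈ S} := by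
        have heq : {p : W × (Fin (n+1) → W) | ∀ i, (p.1, p.2 i) ∈ S}
            = ⋂ i, (fun p : W × (Fin (n+1) → W) => (p.1, p.2 i)) ⁻¹' S := by
          ext p; simp
        rw [heq]
        exact MeasurableSet.iInter fun i =>
          (measurable_fst.prodMk ((measurable_pi_apply i).comp measurable_snd)) hS
      have h2 : MeasurableSet
          {p : W × (Fin (n+1) → W) | ∀ i j : Fin (n+1), i < j → e (p.2 i) < e (p.2 j)} := by
        have heq : {p : W × (Fin (n+1) → W) | ∀ i j : Fin (n+1), i < j → e (p.2 i) < e (p.2 j)}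
            = ⋂ (i) (j), {p : W × (Fin (n+1) → W) | i < j → e (p.2 i) < e (p.2 j)} := by
          ext p; simp
        rw [heq]
        refine MeasurableSet.iInter fun i => MeasurableSet.iInter fun j => ?_
        by_cases hij : i < j
        · have heq2 : {p : W × (Fin (n+1) → W) | i < j → e (p.2 i) < e (p.2 j)}
              = {p : W × (Fin (n+1) → W) | e (p.2 i) < e (p.2 j)} := by
            ext p; simp [hij]
          rw [heq2]
          exact measurableSet_lt
            (he.measurable.comp ((measurable_pi_apply i).comp measurable_snd))
            (he.measurable.comp ((measurable_pi_apply j).comp measurable_snd))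
        · have heq2 : {p : W × (Fin (n+1) → W) | i < j → e (p.2 i) < e (p.2 j)} = univ := by
            ext p; simp [hij]
          rw [heq2]
          exact MeasurableSet.univ
      exact h1.inter h2
    -- range of a tuple in T is the full section
    have hrange : ∀ p ∈ T, range p.2 = {y | (p.1, y) ∈ S} := by
      rintro ⟨x, f⟩ ⟨hf1, hf2⟩
      have hmono : StrictMono (fun i => e (f i)) := fun i j hij => hf2 i j hij
      have hinjf : Function.Injective f := fun i j hij => by
        have := hmono.injective (congrArg e hij); exact this
      have hsub : range f ⊆ {y | (x, y) ∈ S} := by rintro y ⟨i, rfl⟩; exact hf1 i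
      have hcardr : (range f).encard = ((n+1 : ℕ) : ℕ∞) := by
        rw [← image_univ, Set.InjOn.encard_image hinjf.injOn]
        simp [Set.encard_univ]
      have hfin : {y | (x, y) ∈ S}.Finite := Set.finite_of_encard_le_coe (hsec x)
      exact hfin.eq_of_subset_of_encard_le' hsub (by rw [hcardr]; exact_mod_cast hsec x)
    have hinj : Set.InjOn Prod.fst T := by
      rintro ⟨x, f⟩ hf ⟨x', g⟩ hg (h : x = x')
      subst h
      have hrf := hrange _ hf
      have hrg := hrange _ hg
      have hmf : StrictMono (fun i => e (f i)) := fun i j hij => hf.2 i j hij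
      have hmg : StrictMono (fun i => e (g i)) := fun i j hij => hg.2 i j hij
      have hr : range (fun i => e (f i)) = range (fun i => e (g i)) := by
        have : e '' (range f) = e '' (range g) := by rw [hrf, hrg]
        simpa [← Set.range_comp, Function.comp_def] using this
      haveI : WellFoundedLT (Fin (n+1)) := inferInstance
      have : (fun i => e (f i)) = (fun i => e (g i)) := (hmf.range_inj hmg).1 hr
      have : f = g := funext fun i => he.injective (congrFun this i)
      simp [this]
    have hFmeas : MeasurableSet (Prod.fst '' T) :=
      hTmeas.image_of_measurable_injOn measurable_fst hinj
    set F := Prod.fst '' T with hFdef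
    set S' := S \ (F ×ˢ (univ : Set W)) with hS'def
    have hS'meas : MeasurableSet S' := hS.diff (hFmeas.prod MeasurableSet.univ)
    have hS'sec : ∀ x : W, {y | (x, y) ∈ S'}.encard ≤ (n : ℕ∞) := by
      intro x
      by_cases hxF : x ∈ F
      · have : {y | (x, y) ∈ S'} = ∅ := by
          ext y; simp [hS'def, hxF]
        simp [this]
      · have hsame : {y | (x, y) ∈ S'} = {y | (x, y) ∈ S} := by
          ext y; simp [hS'def, hxF]
        rw [hsame]
        by_contra hgt
        have hge : ((n+1 : ℕ) : ℕ∞) ≤ {y | (x, y) ∈ S}.encard := by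
          push_cast
          exact (ENat.add_one_le_iff (by simp)).mpr (not_le.mp hgt)
        obtain ⟨t, hts, htcard⟩ := Set.exists_subset_encard_eq hge
        have htfin : t.Finite := Set.finite_of_encard_le_coe htcard.le
        -- build a strictly increasing enumeration of t
        have hcard : htfin.toFinset.card = n + 1 := by
          have := htfin.encard_eq_coe_toFinset_card
          rw [htcard] at this
          exact_mod_cast this.symm
        set u : Finset ℝ := htfin.toFinset.image e with hudef
        have hucard : u.card = n + 1 := by
          rw [hudef, Finset.card_image_of_injective _ he.injective, hcard]
        set ord := u.orderIsoOfFin hucard with horddef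
        have hex : ∀ i : Fin (n+1), ∃ v ∈ t, e v = (ord i : ℝ) := by
          intro i
          have hmem : (ord i : ℝ) ∈ u := (ord i).2
          obtain ⟨v, hv, hev⟩ := Finset.mem_image.mp hmem
          exact ⟨v, htfin.mem_toFinset.mp hv, hev⟩
        choose f hf hef using hex
        have hxFmem : x ∈ F := by
          refine ⟨(x, f), ⟨fun i => hts (hf i), fun i j hij => ?_⟩, rfl⟩
          rw [hef i, hef j]
          exact_mod_cast ord.strictMono hij
        exact hxF hxFmem
    have hun : Prod.fst '' S = F ∪ Prod.fst '' S' := by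
      apply Set.Subset.antisymm
      · rintro x ⟨⟨x', y⟩, hxy, rfl⟩
        by_cases hxF : (x', y).1 ∈ F
        · exact Or.inl hxF
        · exact Or.inr ⟨(x', y), ⟨hxy, by simp [hxF]⟩, rfl⟩
      · rintro x (hx | ⟨⟨x', y⟩, hxy, rfl⟩)
        · obtain ⟨⟨x', f⟩, hT, rfl⟩ := hx
          exact ⟨(x', f 0), hT.1 0, rfl⟩
        · exact ⟨(x', y), hxy.1, rfl⟩
    rw [hun]
    exact hFmeas.union (ih S' hS'meas hS'sec)

variable {V : Type*}

/-- Symmetrised adjacency without loops. -/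
def adjRel (E : V → V → Prop) (x y : V) : Prop := x ≠ y ∧ (E x y ∨ E y x)

lemma adjRel_symm {E : V → V → Prop} {x y : V} (h : adjRel E x y) : adjRel E y x :=
  ⟨h.1.symm, h.2.symm⟩

lemma adjRel_mem_nbr {E : V → V → Prop} {x y : V} (h : adjRel E x y) : y ∈ Nbr E x := by
  rcases h.2 with h2 | h2
  · exact Or.inl h2
  · exact Or.inr h2

/-- Vertices having a neighbour in `Wt`. -/
def nbrIn (E : V → V → Prop) (Wt : Set V) : Set V := {x | ∃ y, adjRel E x y ∧ y ∈ Wt}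

section Meas
variable [MeasurableSpace V] [StandardBorelSpace V]

lemma adjRel_measurable {E : V → V → Prop} (hE : MeasurableSet {p : V × V | E p.1 p.2}) :
    MeasurableSet {p : V × V | adjRel E p.1 p.2} := by
  obtain ⟨e, he⟩ := exists_measurableEmbedding_real V
  have hdiag : MeasurableSet {p : V × V | p.1 = p.2} := by
    have heq : {p : V × V | p.1 = p.2} = {p : V × V | e p.1 = e p.2} := by
      ext p; exact ⟨fun h => congrArg e h, fun h => he.injective h⟩
    rw [heq]
    exact measurableSet_eq_fun (he.measurable.comp measurable_fst)
      (he.measurable.comp measurable_snd)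
  have hswap : MeasurableSet {p : V × V | E p.2 p.1} := by
    have heq : {p : V × V | E p.2 p.1} = Prod.swap ⁻¹' {p : V × V | E p.1 p.2} := rfl
    rw [heq]; exact measurable_swap hE
  have heq : {p : V × V | adjRel E p.1 p.2}
      = {p : V × V | p.1 = p.2}ᶜ ∩ ({p : V × V | E p.1 p.2} ∪ {p : V × V | E p.2 p.1}) := by
    ext p
    simp only [adjRel, mem_setOf_eq, mem_inter_iff, mem_compl_iff, mem_union]
  rw [heq]
  exact hdiag.compl.inter (hE.union hswap)

lemma nbrIn_measurable {E : V → V → Prop} (hE : MeasurableSet {p : V × V | E p.1 p.2})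
    {d : ℕ} (hd : ∀ x : V, (Nbr E x).encard ≤ (d : ℕ∞))
    {Wt : Set V} (hWt : MeasurableSet Wt) : MeasurableSet (nbrIn E Wt) := by
  have heq : nbrIn E Wt
      = Prod.fst '' ({p : V × V | adjRel E p.1 p.2} ∩ ((univ : Set V) ×ˢ Wt)) := by
    ext x
    constructor
    · rintro ⟨y, h1, h2⟩; exact ⟨(x, y), ⟨h1, ⟨trivial, h2⟩⟩, rfl⟩
    · rintro ⟨⟨x', y⟩, ⟨h1, _, h2⟩, rfl⟩; exact ⟨y, h1, h2⟩
  rw [heq]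
  apply proj_meas d
  · exact (adjRel_measurable hE).inter (MeasurableSet.univ.prod hWt)
  · intro x
    refine le_trans (Set.encard_mono ?_) (hd x)
    rintro y ⟨h1, _, _⟩
    exact adjRel_mem_nbr h1

end Meas

/-- Greedy construction of a maximal independent set along a colouring. -/
def greedy (E : V → V → Prop) (A : Set V) (c : V → ℕ) : ℕ → Set V
  | 0 => ∅
  | k + 1 => greedy E A c k ∪ ((A ∩ {x | c x = k}) \ nbrIn E (greedy E A c k))

lemma greedy_subset (E : V → V → Prop) (A : Set V) (c : V → ℕ) :
    ∀ k, greedy E A c k ⊆ A := by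
  intro k
  induction k with
  | zero => simp [greedy]
  | succ k ih =>
    rintro x (hx | hx)
    · exact ih hx
    · exact hx.1.1

lemma greedy_mono (E : V → V → Prop) (A : Set V) (c : V → ℕ) :
    Monotone (greedy E A c) := by
  apply monotone_nat_of_le_succ
  intro k
  exact Set.subset_union_left

lemma greedy_stage {E : V → V → Prop} {A : Set V} {c : V → ℕ} {x : V}
    (hx : x ∈ ⋃ k, greedy E A c k) :
    ∃ k, x ∈ A ∧ c x = k ∧ x ∉ nbrIn E (greedy E A c k) ∧ x ∉ greedy E A c k
      ∧ x ∈ greedy E A c (k + 1) := by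
  obtain ⟨m, hm⟩ : ∃ m, x ∈ greedy E A c m := by simpa using hx
  have h0 : 0 < m := by
    rcases Nat.eq_zero_or_pos m with rfl | h
    · exact absurd hm (by simp [greedy])
    · exact h
  -- least stage
  have hex : ∃ m, x ∈ greedy E A c m := ⟨m, hm⟩
  obtain ⟨m', hmem, hleast⟩ :
      ∃ m', x ∈ greedy E A c m' ∧ ∀ j < m', x ∉ greedy E A c j :=
    ⟨Nat.find hex, Nat.find_spec hex, fun j hj => Nat.find_min hex hj⟩
  have hm0 : m' ≠ 0 := by rintro rfl; exact absurd hmem (by simp [greedy])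
  obtain ⟨k, rfl⟩ := Nat.exists_eq_succ_of_ne_zero hm0
  have hnot : x ∉ greedy E A c k := hleast k (Nat.lt_succ_self k)
  rcases hmem with hmem | hmem
  · exact absurd hmem hnot
  · exact ⟨k, hmem.1.1, hmem.1.2, hmem.2, hnot, Or.inr hmem⟩


end BMIAux

open Set in
open BMIAux in
open MTLLL in
/-- Lemma 4.4(a): in a Borel digraph of finite maximal degree, every Borel set contains a
maximal independent subset which is Borel. -/
theorem exists_borel_maximal_independent
    {V : Type*} [Nonempty V] [MeasurableSpace V] [StandardBorelSpace V]
    (E : V → V → Prop) (hE : MeasurableSet {p : V × V | E p.1 p.2})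
    (hdeg : maxdeg E < ⊤) (A : Set V) (hA : MeasurableSet A) :
    ∃ B : Set V, MeasurableSet B ∧ MaxIndepIn E A B := by
  -- extract a uniform finite degree bound
  obtain ⟨d, hd⟩ : ∃ d : ℕ, ∀ x : V, (Nbr E x).encard ≤ (d : ℕ∞) := by
    obtain ⟨d, hdeq⟩ := WithTop.ne_top_iff_exists.mp hdeg.ne
    exact ⟨d, fun x =>
      le_trans (le_iSup (fun x : V => (Nbr E x).encard) x) hdeq.ge⟩
  obtain ⟨e, he⟩ := exists_measurableEmbedding_real V
  -- the countable family of rational intervals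
  let qe : ℕ ≃ ℚ × ℚ := (Denumerable.eqv (ℚ × ℚ)).symm
  let U : ℕ → Set V := fun n => e ⁻¹' (Ioo ((qe n).1 : ℝ) ((qe n).2 : ℝ))
  have hU : ∀ n, MeasurableSet (U n) := fun n => he.measurable measurableSet_Ioo
  -- separation: each vertex has an interval containing it and avoiding its neighbours
  have hsep : ∀ x : V, ∃ n, x ∈ U n ∧ x ∉ nbrIn E (U n) := by
    intro x
    have hNfin : {y | adjRel E x y}.Finite := by
      have hfin : (Nbr E x).Finite := Set.finite_of_encard_le_coe (hd x)
      exact hfin.subset (fun y hy => adjRel_mem_nbr hy)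
    have hclosed : IsClosed (e '' {y | adjRel E x y}) := (hNfin.image e).isClosed
    have hnot : e x ∉ e '' {y | adjRel E x y} := by
      rintro ⟨y, hy, hey⟩
      exact hy.1.symm (he.injective hey)
    obtain ⟨ε, hε, hball⟩ := Metric.isOpen_iff.mp hclosed.isOpen_compl (e x) hnot
    obtain ⟨p, hp1, hp2⟩ := exists_rat_btwn (show e x - ε < e x by linarith)
    obtain ⟨r, hr1, hr2⟩ := exists_rat_btwn (show e x < e x + ε by linarith)
    refine ⟨qe.symm (p, r), ?_, ?_⟩
    · show e x ∈ Ioo ((qe (qe.symm (p, r))).1 : ℝ) ((qe (qe.symm (p, r))).2 : ℝ)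
      rw [Equiv.apply_symm_apply]
      exact ⟨hp2, hr1⟩
    · rintro ⟨y, hadj, hyU⟩
      have hyU' : e y ∈ Ioo ((qe (qe.symm (p, r))).1 : ℝ) ((qe (qe.symm (p, r))).2 : ℝ) := hyU
      rw [Equiv.apply_symm_apply] at hyU'
      have hdist : e y ∈ Metric.ball (e x) ε := by
        rw [Metric.mem_ball, Real.dist_eq, abs_sub_lt_iff]
        exact ⟨by linarith [hyU'.2], by linarith [hyU'.1]⟩
      exact hball hdist (mem_image_of_mem e hadj)
  -- the colouring
  let c : V → ℕ := fun x => Nat.find (hsep x)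
  have hc_mem : ∀ x, x ∈ U (c x) ∧ x ∉ nbrIn E (U (c x)) := fun x => Nat.find_spec (hsep x)
  have hc_meas : ∀ n, MeasurableSet {x | c x = n} := by
    intro n
    have heq : {x | c x = n} = (U n ∩ (nbrIn E (U n))ᶜ)
        ∩ ⋂ m ∈ Finset.range n, (U m ∩ (nbrIn E (U m))ᶜ)ᶜ := by
      ext x
      simp only [mem_setOf_eq, mem_inter_iff, mem_compl_iff, mem_iInter, Finset.mem_range]
      rw [show c x = Nat.find (hsep x) from rfl, Nat.find_eq_iff]
    rw [heq]
    refine (((hU n).inter (nbrIn_measurable hE hd (hU n)).compl)).inter ?_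
    exact MeasurableSet.biInter (Finset.range n).countable_toSet
      (fun m _ => ((hU m).inter (nbrIn_measurable hE hd (hU m)).compl).compl)
  have hproper : ∀ x y, adjRel E x y → c x ≠ c y := by
    intro x y hadj heq
    exact (hc_mem x).2 ⟨y, hadj, by rw [heq]; exact (hc_mem y).1⟩
  -- the greedy set
  have hgreedy_meas : ∀ k, MeasurableSet (greedy E A c k) := by
    intro k
    induction k with
    | zero => exact MeasurableSet.empty
    | succ k ih =>
      exact ih.union ((hA.inter (hc_meas k)).diff (nbrIn_measurable hE hd ih))
  refine ⟨⋃ k, greedy E A c k, MeasurableSet.iUnion hgreedy_meas, ?_, ?_, ?_⟩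
  · -- subset of A
    exact iUnion_subset fun k => greedy_subset E A c k
  · -- independent
    intro x hx y hy hne hExy
    have hadj : adjRel E x y := ⟨hne, Or.inl hExy⟩
    obtain ⟨k, _, hcx, hkx, _, hx1⟩ := greedy_stage hx
    obtain ⟨m, _, hcy, hky, _, hy1⟩ := greedy_stage hy
    rcases lt_trichotomy k m with h | h | h
    · exact hky ⟨x, adjRel_symm hadj, greedy_mono E A c h hx1⟩
    · exact hproper x y hadj (hcx.trans (h ▸ hcy.symm))
    · exact hkx ⟨y, hadj, greedy_mono E A c h hy1⟩
  · -- maximal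
    intro J hBJ hJA hJindep
    refine Set.Subset.antisymm ?_ hBJ
    intro x hxJ
    by_contra hxB
    have hxA : x ∈ A := hJA hxJ
    have hx1 : x ∉ greedy E A c (c x + 1) := fun h => hxB (mem_iUnion.mpr ⟨c x + 1, h⟩)
    have hx0 : x ∉ greedy E A c (c x) := fun h => hxB (mem_iUnion.mpr ⟨c x, h⟩)
    have hnbr : x ∈ nbrIn E (greedy E A c (c x)) := by
      by_contra hn
      exact hx1 (Or.inr ⟨⟨hxA, rfl⟩, hn⟩)
    obtain ⟨y, hadj, hyB⟩ := hnbr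
    have hyJ : y ∈ J := hBJ (mem_iUnion.mpr ⟨c x, hyB⟩)
    rcases hadj.2 with hxy | hyx
    · exact hJindep x hxJ y hyJ hadj.1 hxy
    · exact hJindep y hyJ x hxJ hadj.1.symm hyx
end
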